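/- arXiv:0904.1678 — 9 statements merged into one kernel-verified Lean document; each statement's English description precedes it below -/
import Mathlib

section
/- Every single-based equational class of F-algebras is a naturally single-induced class. Precisely: let e : F_n X → E be a regular epimorphism arising as the coequalizer of a parallel pair φ₀, ψ₀ : Q ⇉ F_n X. Define G = (− • Q) ∘ hom(X, −) (copower of Q indexed by hom(X,−)) and natural transformations φ, ψ : G → F_n with components φ_A : hom(X,A) • Q → F_n A determined on the f-labeled coproduct injection u_f by φ_A ∘ u_f = F_n f ∘ φ₀ (and similarly ψ_A ∘ u_f = F_n f ∘ ψ₀). Then an F-algebra (A, α) satisfies the equation arrow e (i.e., for every f : X → A there is h : E → A with ε_{n,(A,α)} ∘ F_n f = h ∘ e) if and only if (A, α) satisfies the natural identity (φ, ψ) (i.e., ε_{n,(A,α)} ∘ φ_A = ε_{n,(A,α)} ∘ ψ_A). -/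
open CategoryTheory CategoryTheory.Limits

universe v u

/-- The free-algebra (term functor) construction for an endofunctor `F` on a cocomplete
category: term functors `Fo n` for each ordinal `n`, connecting natural transformations
`w`, coproduct injections `q n : F ∘ Fₙ ⟶ F_{n+1}` and `ι n : Id ⟶ Fₙ`, where
`F₀ = Id` (up to iso, witnessed by `ι 0` being invertible), `F_{n+1} = F Fₙ + Id`
(witnessed by the binary-coproduct universal property), and `Fₗ = colim_{m<l} F_m` at
limit ordinals (witnessed by the hand-rolled colimit universal property). -/
structure TermConstruction {C : Type u} [Category.{v} C] (F : C ⥤ C) where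
  Fo : Ordinal.{v} → C ⥤ C
  w : ∀ {m n : Ordinal.{v}}, m ≤ n → (Fo m ⟶ Fo n)
  q : ∀ n : Ordinal.{v}, Fo n ⋙ F ⟶ Fo (n + 1)
  ι : ∀ n : Ordinal.{v}, 𝟭 C ⟶ Fo n
  iso0 : IsIso (ι 0)
  w_refl : ∀ n : Ordinal.{v}, w (le_refl n) = 𝟙 (Fo n)
  w_trans : ∀ {m n p : Ordinal.{v}} (h₁ : m ≤ n) (h₂ : n ≤ p), w h₁ ≫ w h₂ = w (h₁.trans h₂)
  ι_w : ∀ {m n : Ordinal.{v}} (h : m ≤ n), ι m ≫ w h = ι n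
  q_w : ∀ {m n : Ordinal.{v}} (h : m ≤ n),
      Functor.whiskerRight (w h) F ≫ q n = q m ≫ w (add_le_add_left h 1)
  succ_isColimit : ∀ (n : Ordinal.{v}) (A : C),
      Nonempty (IsColimit (BinaryCofan.mk ((q n).app A) ((ι (n + 1)).app A)))
  limit_exists_unique : ∀ (n : Ordinal.{v}), Order.IsSuccLimit n → ∀ (A X : C)
      (g : ∀ m : Ordinal.{v}, m < n → ((Fo m).obj A ⟶ X)),
      (∀ (m m' : Ordinal.{v}) (h : m ≤ m') (h' : m' < n),
        (w h).app A ≫ g m' h' = g m (lt_of_le_of_lt h h')) →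
      ∃! k : (Fo n).obj A ⟶ X,
        ∀ (m : Ordinal.{v}) (h : m < n), (w h.le).app A ≫ k = g m h

/-- The term-evaluations `ε n : Fₙ A ⟶ A` of an `F`-algebra `(A, α)`, defined recursively by
`ε 0 = id` (transported along `ι 0`), `ε (n+1) = [α ∘ F (ε n), id]` and colimits at limit
ordinals. -/
structure TermEval {C : Type u} [Category.{v} C] (F : C ⥤ C) (T : TermConstruction F)
    (A : C) (α : F.obj A ⟶ A) where
  ε : ∀ n : Ordinal.{v}, (T.Fo n).obj A ⟶ A
  ε_zero : (T.ι 0).app A ≫ ε 0 = 𝟙 A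
  ε_succ_q : ∀ n : Ordinal.{v}, (T.q n).app A ≫ ε (n + 1) = F.map (ε n) ≫ α
  ε_succ_ι : ∀ n : Ordinal.{v}, (T.ι (n + 1)).app A ≫ ε (n + 1) = 𝟙 A
  ε_limit : ∀ (n : Ordinal.{v}), Order.IsSuccLimit n →
      ∀ (m : Ordinal.{v}) (h : m < n), (T.w h.le).app A ≫ ε n = ε m


/-- Every single-based equational class is naturally single-induced.  Let the equation arrow
`e : Fₙ X ⟶ E₀` be the coequalizer of a parallel pair `φ₀, ψ₀ : Q ⟶ Fₙ X`.  Let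
`G = (− • Q) ∘ hom(X, −)` be the copower construction, witnessed here by a functor `G`
whose value at `A` is the coproduct of copies of `Q` indexed by `hom(X, A)` with coproduct
injections `u A f` (colimit property `hG`), and let `φ, ψ : G ⟶ Fₙ` be the natural
transformations determined on the `f`-labelled injections by `φ_A ∘ u_f = Fₙ f ∘ φ₀` and
`ψ_A ∘ u_f = Fₙ f ∘ ψ₀`.  Then an `F`-algebra `(A, α)` satisfies the equation arrow `e`
(every `f : X ⟶ A` admits `h` with `εₙ ∘ Fₙ f = h ∘ e`) iff it satisfies the natural
identity `(φ, ψ)` (i.e. `εₙ ∘ φ_A = εₙ ∘ ψ_A`). -/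
theorem satisfies_equation_arrow_iff_satisfies_identity {C : Type u} [Category.{v} C]
    [HasColimits C] (F : C ⥤ C) (T : TermConstruction F) {n : Ordinal.{v}}
    (X Q E₀ : C) (φ₀ ψ₀ : Q ⟶ (T.Fo n).obj X) (e : (T.Fo n).obj X ⟶ E₀)
    (he : φ₀ ≫ e = ψ₀ ≫ e)
    (heUniv : ∀ {Y : C} (k : (T.Fo n).obj X ⟶ Y), φ₀ ≫ k = ψ₀ ≫ k →
      ∃! h : E₀ ⟶ Y, e ≫ h = k)
    (G : C ⥤ C) (u : ∀ (A : C), (X ⟶ A) → (Q ⟶ G.obj A))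
    (hG : ∀ (A Y : C) (g : (X ⟶ A) → (Q ⟶ Y)), ∃! k : G.obj A ⟶ Y, ∀ f : X ⟶ A, u A f ≫ k = g f)
    (hu : ∀ {A B : C} (f : X ⟶ A) (p : A ⟶ B), u A f ≫ G.map p = u B (f ≫ p))
    (φ ψ : G ⟶ T.Fo n)
    (hφ : ∀ (A : C) (f : X ⟶ A), u A f ≫ φ.app A = φ₀ ≫ (T.Fo n).map f)
    (hψ : ∀ (A : C) (f : X ⟶ A), u A f ≫ ψ.app A = ψ₀ ≫ (T.Fo n).map f)
    (A : C) (α : F.obj A ⟶ A) (E : TermEval F T A α) :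
    (∀ f : X ⟶ A, ∃ h : E₀ ⟶ A, (T.Fo n).map f ≫ E.ε n = e ≫ h) ↔
      (φ.app A ≫ E.ε n = ψ.app A ≫ E.ε n) := by
  constructor
  · intro hs
    obtain ⟨k, -, hk⟩ := hG A A (fun f => u A f ≫ φ.app A ≫ E.ε n)
    have h1 : φ.app A ≫ E.ε n = k := hk _ (fun f => rfl)
    have h2 : ψ.app A ≫ E.ε n = k := by
      apply hk
      intro f
      obtain ⟨h, hh⟩ := hs f
      calc u A f ≫ ψ.app A ≫ E.ε n = (ψ₀ ≫ (T.Fo n).map f) ≫ E.ε n := by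
            rw [← Category.assoc, hψ]
        _ = ψ₀ ≫ e ≫ h := by rw [Category.assoc, hh]
        _ = φ₀ ≫ e ≫ h := by rw [← Category.assoc, ← Category.assoc, he]
        _ = (φ₀ ≫ (T.Fo n).map f) ≫ E.ε n := by rw [Category.assoc, hh]
        _ = u A f ≫ φ.app A ≫ E.ε n := by rw [← Category.assoc, hφ]
    rw [h1, ← h2]
  · intro hid f
    have : φ₀ ≫ ((T.Fo n).map f ≫ E.ε n) = ψ₀ ≫ ((T.Fo n).map f ≫ E.ε n) := by
      calc φ₀ ≫ ((T.Fo n).map f ≫ E.ε n) = u A f ≫ φ.app A ≫ E.ε n := by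
            rw [← Category.assoc, ← hφ, Category.assoc]
        _ = u A f ≫ ψ.app A ≫ E.ε n := by rw [hid]
        _ = ψ₀ ≫ ((T.Fo n).map f ≫ E.ε n) := by rw [← Category.assoc, hψ, Category.assoc]
    obtain ⟨h, hh, -⟩ := heUniv _ this
    exact ⟨h, hh.symm⟩
end

section
/- Every naturally single-induced class is equational. Precisely: let G be an endofunctor on a cocomplete category C and (φ, ψ) an n-ary G-identity with φ, ψ : G → F_n. Let (E, e) be the coequalizer of φ and ψ in the functor category, so each e_X : F_n X → E X is a regular epimorphism (coequalizer of φ_X, ψ_X, since colimits of functors are computed componentwise). Then an F-algebra (A, α) satisfies the identity (φ, ψ) if and only if it satisfies every equation arrow e_X for X an object of C. -/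
open CategoryTheory CategoryTheory.Limits

universe v u

/-- Every naturally single-induced class is equational.  Let `(φ, ψ)` be an `n`-ary
`G`-identity, `φ, ψ : G ⟶ Fₙ`, and let `e : Fₙ ⟶ E₀` be the coequalizer of `φ` and `ψ` in
the functor category; since colimits of functors are computed componentwise, each component
`e_X : Fₙ X ⟶ E₀ X` is a coequalizer (regular epimorphism) of `(φ_X, ψ_X)`, witnessed by
`he` and `heUniv`.  Then an `F`-algebra `(A, α)` satisfies the identity `(φ, ψ)` iff it
satisfies every equation arrow `e_X` for `X` an object of `C`. -/
theorem satisfies_identity_iff_satisfies_all_equation_arrows {C : Type u} [Category.{v} C]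
    [HasColimits C] (F : C ⥤ C) (T : TermConstruction F) {n : Ordinal.{v}}
    (G : C ⥤ C) (φ ψ : G ⟶ T.Fo n) (E₀ : C ⥤ C) (e : T.Fo n ⟶ E₀)
    (he : φ ≫ e = ψ ≫ e)
    (heUniv : ∀ (X : C) {Y : C} (k : (T.Fo n).obj X ⟶ Y), φ.app X ≫ k = ψ.app X ≫ k →
      ∃! h : E₀.obj X ⟶ Y, e.app X ≫ h = k)
    (A : C) (α : F.obj A ⟶ A) (E : TermEval F T A α) :
    (φ.app A ≫ E.ε n = ψ.app A ≫ E.ε n) ↔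
      (∀ (X : C) (f : X ⟶ A), ∃ h : E₀.obj X ⟶ A, (T.Fo n).map f ≫ E.ε n = e.app X ≫ h) := by
  constructor
  · intro hid X f
    have hk : φ.app X ≫ ((T.Fo n).map f ≫ E.ε n) = ψ.app X ≫ ((T.Fo n).map f ≫ E.ε n) := by
      rw [← Category.assoc, ← Category.assoc, ← φ.naturality, ← ψ.naturality,
        Category.assoc, Category.assoc, hid]
    obtain ⟨h, hh, -⟩ := heUniv X ((T.Fo n).map f ≫ E.ε n) hk
    exact ⟨h, hh.symm⟩
  · intro hall
    obtain ⟨h, hh⟩ := hall A (𝟙 A)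
    rw [(T.Fo n).map_id, Category.id_comp] at hh
    have := congrArg (fun t => NatTrans.app t A) he
    simp only [NatTrans.comp_app] at this
    rw [hh, ← Category.assoc, this, Category.assoc]
end

section
/- For an endofunctor F on a cocomplete category, the equational classes of F-algebras coincide with the naturally induced classes of F-algebras: a full subcategory of Alg F is of the form Alg(F, E) for a class E of equation arrows if and only if it is of the form Alg(F, I) for a class I of natural identities. -/
open CategoryTheory CategoryTheory.Limits

universe v u

variable {C : Type u} [Category.{v} C]

/-- An equation arrow of arity `n` over the variable-object `X`: a regular epimorphism
`e : Fₙ X ⟶ tgt`. -/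
structure EqArrow {F : C ⥤ C} (T : TermConstruction F) where
  n : Ordinal.{v}
  X : C
  tgt : C
  e : (T.Fo n).obj X ⟶ tgt
  regEpi : RegularEpi e

/-- A natural identity: a pair of natural terms `φ : G ⟶ F_{m}`, `ψ : G ⟶ F_{m'}` with common
domain `G`. -/
structure NatIdentity {F : C ⥤ C} (T : TermConstruction F) where
  G : C ⥤ C
  m : Ordinal.{v}
  m' : Ordinal.{v}
  φ : G ⟶ T.Fo m
  ψ : G ⟶ T.Fo m'

/-- Satisfaction of an equation arrow by an `F`-algebra `(A, α)` (with chosen term-evaluations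
`Ev`): every `f : X ⟶ A` factors the evaluated term map through `e`. -/
def SatisfiesEqArrow {F : C ⥤ C} {T : TermConstruction F}
    (Ev : ∀ (A : C) (α : F.obj A ⟶ A), TermEval F T A α)
    (e : EqArrow T) (A : C) (α : F.obj A ⟶ A) : Prop :=
  ∀ f : e.X ⟶ A, ∃ h : e.tgt ⟶ A, (T.Fo e.n).map f ≫ (Ev A α).ε e.n = e.e ≫ h

/-- Satisfaction of a natural identity by an `F`-algebra `(A, α)`: the two term-evaluations of
its natural terms agree. -/
def SatisfiesNatIdentity {F : C ⥤ C} {T : TermConstruction F}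
    (Ev : ∀ (A : C) (α : F.obj A ⟶ A), TermEval F T A α)
    (i : NatIdentity T) (A : C) (α : F.obj A ⟶ A) : Prop :=
  i.φ.app A ≫ (Ev A α).ε i.m = i.ψ.app A ≫ (Ev A α).ε i.m'

section Aux

variable [HasColimits C] {F : C ⥤ C} {T : TermConstruction F}

/-- Key compatibility: term evaluations commute with the connecting maps `w`. -/
theorem TermEval.w_eps (Ev : ∀ (A : C) (α : F.obj A ⟶ A), TermEval F T A α) :
    ∀ (n m : Ordinal.{v}) (h : m ≤ n) (A : C) (α : F.obj A ⟶ A),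
      (T.w h).app A ≫ (Ev A α).ε n = (Ev A α).ε m := by
  intro n
  induction n using Ordinal.induction with
  | h n IHn =>
  intro m
  induction m using Ordinal.induction with
  | h m IHm =>
  intro h A α
  rcases eq_or_lt_of_le h with rfl | hlt
  · have e : T.w h = 𝟙 (T.Fo m) := T.w_refl m
    rw [e]; simp
  rcases Ordinal.zero_or_succ_or_isSuccLimit n with rfl | ⟨k, hk⟩ | hn
  · exact absurd hlt (by simp)
  · obtain rfl : n = k + 1 := by rw [Ordinal.add_one_eq_succ]; exact hk.symm
    have hklt : k < k + 1 := by rw [Ordinal.add_one_eq_succ]; exact Order.lt_succ k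
    rcases Ordinal.zero_or_succ_or_isSuccLimit m with rfl | ⟨j, hj⟩ | hm
    · -- m = 0
      haveI := T.iso0
      have h1 : (T.ι 0).app A ≫ (T.w h).app A = (T.ι (k + 1)).app A := by
        rw [← NatTrans.comp_app, T.ι_w h]
      rw [← cancel_epi ((T.ι (0 : Ordinal.{v})).app A), (Ev A α).ε_zero,
        ← Category.assoc, h1, (Ev A α).ε_succ_ι k]
    · -- m = j + 1
      obtain rfl : m = j + 1 := by rw [Ordinal.add_one_eq_succ]; exact hj.symm
      have hjk : j ≤ k := by
        have h' : j + 1 ≤ k + 1 := h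
        rwa [Ordinal.add_one_eq_succ, Ordinal.add_one_eq_succ,
          Order.succ_le_succ_iff] at h'
      obtain ⟨hc⟩ := T.succ_isColimit j A
      apply BinaryCofan.IsColimit.hom_ext hc
      · -- the `q` component
        show (T.q j).app A ≫ (T.w h).app A ≫ (Ev A α).ε (k + 1)
            = (T.q j).app A ≫ (Ev A α).ε (j + 1)
        have hw : T.w h = T.w (add_le_add_left hjk 1) := rfl
        have hq := congr_app (T.q_w hjk) A
        simp only [Functor.whiskerRight_app, NatTrans.comp_app] at hq
        rw [hw, ← Category.assoc, ← hq, Category.assoc, (Ev A α).ε_succ_q k,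
          (Ev A α).ε_succ_q j, ← Category.assoc, ← F.map_comp,
          IHn k hklt j hjk A α]
      · -- the `ι` component
        show (T.ι (j + 1)).app A ≫ (T.w h).app A ≫ (Ev A α).ε (k + 1)
            = (T.ι (j + 1)).app A ≫ (Ev A α).ε (j + 1)
        have h1 : (T.ι (j + 1)).app A ≫ (T.w h).app A = (T.ι (k + 1)).app A := by
          rw [← NatTrans.comp_app, T.ι_w h]
        rw [← Category.assoc, h1, (Ev A α).ε_succ_ι k, (Ev A α).ε_succ_ι j]
    · -- m a limit ordinal
      obtain ⟨kk, -, hk2⟩ := T.limit_exists_unique m hm A A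
        (fun p hp => (Ev A α).ε p)
        (fun p p' hpp' hp' => IHn p' (hp'.trans hlt) p hpp' A α)
      have e1 := hk2 ((Ev A α).ε m) (fun p hp => (Ev A α).ε_limit m hm p hp)
      have e2 := hk2 ((T.w h).app A ≫ (Ev A α).ε (k + 1)) (fun p hp => by
        rw [← Category.assoc, ← NatTrans.comp_app, T.w_trans hp.le h]
        exact IHm p hp (hp.le.trans h) A α)
      exact e2.trans e1.symm
  · -- n a limit ordinal
    exact (Ev A α).ε_limit n hn m hlt

/-- The natural identity encoding an equation arrow. -/
noncomputable def EqArrow.toNatIdentity (e : EqArrow T) : NatIdentity T where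
  G :=
    { obj := fun A => ∐ fun (_ : e.X ⟶ A) => e.regEpi.W
      map := fun {A B} g =>
        Sigma.desc fun f => Sigma.ι (fun (_ : e.X ⟶ B) => e.regEpi.W) (f ≫ g)
      map_id := by intro A; ext f; simp
      map_comp := by intro A B D g g'; ext f; simp }
  m := e.n
  m' := e.n
  φ :=
    { app := fun A => Sigma.desc fun f => e.regEpi.left ≫ (T.Fo e.n).map f
      naturality := by intro A B g; ext f; simp }
  ψ :=
    { app := fun A => Sigma.desc fun f => e.regEpi.right ≫ (T.Fo e.n).map f
      naturality := by intro A B g; ext f; simp }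

theorem EqArrow.toNatIdentity_iff (Ev : ∀ (A : C) (α : F.obj A ⟶ A), TermEval F T A α)
    (e : EqArrow T) (A : C) (α : F.obj A ⟶ A) :
    SatisfiesNatIdentity Ev e.toNatIdentity A α ↔ SatisfiesEqArrow Ev e A α := by
  have key : SatisfiesNatIdentity Ev e.toNatIdentity A α ↔
      ∀ f : e.X ⟶ A,
        e.regEpi.left ≫ (T.Fo e.n).map f ≫ (Ev A α).ε e.n
          = e.regEpi.right ≫ (T.Fo e.n).map f ≫ (Ev A α).ε e.n := by
    unfold SatisfiesNatIdentity
    dsimp [EqArrow.toNatIdentity]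
    constructor
    · intro hs f
      have h2 := congrArg
        (fun t => Sigma.ι (fun (_ : e.X ⟶ A) => e.regEpi.W) f ≫ t) hs
      simpa using h2
    · intro hs
      ext f
      simpa using hs f
  rw [key]
  constructor
  · intro hs f
    refine ⟨Cofork.IsColimit.desc e.regEpi.isColimit
      ((T.Fo e.n).map f ≫ (Ev A α).ε e.n) (hs f), ?_⟩
    exact (Cofork.IsColimit.π_desc' e.regEpi.isColimit _ (hs f)).symm
  · intro hs f
    obtain ⟨h, hh⟩ := hs f
    rw [hh, ← Category.assoc, e.regEpi.w, Category.assoc]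

/-- The equation arrows (one for each variable-object `X`) encoding a natural identity. -/
noncomputable def NatIdentity.toEqArrow (i : NatIdentity T) (X : C) : EqArrow T where
  n := i.m ⊔ i.m'
  X := X
  tgt := coequalizer (i.φ.app X ≫ (T.w le_sup_left).app X)
    (i.ψ.app X ≫ (T.w le_sup_right).app X)
  e := coequalizer.π _ _
  regEpi := coequalizerRegular _ _

theorem NatIdentity.toEqArrow_iff (Ev : ∀ (A : C) (α : F.obj A ⟶ A), TermEval F T A α)
    (i : NatIdentity T) (A : C) (α : F.obj A ⟶ A) :
    (∀ X : C, SatisfiesEqArrow Ev (i.toEqArrow X) A α) ↔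
      SatisfiesNatIdentity Ev i A α := by
  have evφ : ∀ (X : C) (f : X ⟶ A),
      (i.φ.app X ≫ (T.w (le_sup_left : i.m ≤ i.m ⊔ i.m')).app X) ≫
          (T.Fo (i.m ⊔ i.m')).map f ≫ (Ev A α).ε (i.m ⊔ i.m')
        = i.G.map f ≫ i.φ.app A ≫ (Ev A α).ε i.m := by
    intro X f
    simp only [Category.assoc]
    rw [← NatTrans.naturality_assoc (T.w (le_sup_left : i.m ≤ i.m ⊔ i.m')) f,
      TermEval.w_eps Ev (i.m ⊔ i.m') i.m le_sup_left A α,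
      ← NatTrans.naturality_assoc i.φ f]
  have evψ : ∀ (X : C) (f : X ⟶ A),
      (i.ψ.app X ≫ (T.w (le_sup_right : i.m' ≤ i.m ⊔ i.m')).app X) ≫
          (T.Fo (i.m ⊔ i.m')).map f ≫ (Ev A α).ε (i.m ⊔ i.m')
        = i.G.map f ≫ i.ψ.app A ≫ (Ev A α).ε i.m' := by
    intro X f
    simp only [Category.assoc]
    rw [← NatTrans.naturality_assoc (T.w (le_sup_right : i.m' ≤ i.m ⊔ i.m')) f,
      TermEval.w_eps Ev (i.m ⊔ i.m') i.m' le_sup_right A α,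
      ← NatTrans.naturality_assoc i.ψ f]
  constructor
  · intro hs
    obtain ⟨h, hh⟩ := hs A (𝟙 A)
    unfold SatisfiesNatIdentity
    have e1 := evφ A (𝟙 A)
    have e2 := evψ A (𝟙 A)
    simp only [CategoryTheory.Functor.map_id, Category.id_comp] at e1 e2
    dsimp [NatIdentity.toEqArrow] at hh
    simp only [CategoryTheory.Functor.map_id, Category.id_comp] at hh
    rw [← e1, ← e2, hh]
    exact coequalizer.condition_assoc _ _ h
  · intro hs X f
    refine ⟨coequalizer.desc ((T.Fo (i.m ⊔ i.m')).map f ≫ (Ev A α).ε (i.m ⊔ i.m'))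
      ?_, ?_⟩
    · rw [evφ X f, evψ X f, hs]
    · exact (coequalizer.π_desc _ _).symm

end Aux

/-- Equational classes of `F`-algebras coincide with naturally induced classes: a class `S` of
`F`-algebras is induced by a class of equation arrows iff it is induced by a class of natural
identities. -/
theorem equational_iff_naturally_induced [HasColimits C] (F : C ⥤ C)
    (T : TermConstruction F)
    (Ev : ∀ (A : C) (α : F.obj A ⟶ A), TermEval F T A α)
    (S : ∀ A : C, (F.obj A ⟶ A) → Prop) :
    (∃ 𝓔 : Set (EqArrow T), ∀ (A : C) (α : F.obj A ⟶ A),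
        S A α ↔ ∀ e ∈ 𝓔, SatisfiesEqArrow Ev e A α) ↔
      (∃ 𝓘 : Set (NatIdentity T), ∀ (A : C) (α : F.obj A ⟶ A),
        S A α ↔ ∀ i ∈ 𝓘, SatisfiesNatIdentity Ev i A α) := by
  constructor
  · rintro ⟨E, hE⟩
    refine ⟨EqArrow.toNatIdentity '' E, fun A α => (hE A α).trans ?_⟩
    constructor
    · rintro h _ ⟨e, he, rfl⟩
      exact (EqArrow.toNatIdentity_iff Ev e A α).2 (h e he)
    · intro h e he
      exact (EqArrow.toNatIdentity_iff Ev e A α).1 (h _ ⟨e, he, rfl⟩)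
  · rintro ⟨I, hI⟩
    refine ⟨{e | ∃ i ∈ I, ∃ X, e = i.toEqArrow X}, fun A α => (hI A α).trans ?_⟩
    constructor
    · rintro h e ⟨i, hi, X, rfl⟩
      exact ((NatIdentity.toEqArrow_iff Ev i A α).2 (h i hi)) X
    · intro h i hi
      exact (NatIdentity.toEqArrow_iff Ev i A α).1 (fun X => h _ ⟨i, hi, X, rfl⟩)
end

section
/- Let F be an endofunctor on a cocomplete category preserving colimits of λ-indexed chains for an infinite limit ordinal λ. Then the free-algebra construction stops after λ steps: the connecting natural transformation w_{λ, λ+1} : F_λ → F_{λ+1} = F F_λ + Id is a natural isomorphism. -/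
open CategoryTheory CategoryTheory.Limits

universe v u

section Aux

variable {C : Type u} [Category.{v} C] {F : C ⥤ C} (T : TermConstruction F)
  (l : Ordinal.{v}) (A : C)

lemma w_trans_app {m n p : Ordinal.{v}} (h₁ : m ≤ n) (h₂ : n ≤ p) :
    (T.w h₁).app A ≫ (T.w h₂).app A = (T.w (h₁.trans h₂)).app A := by
  rw [← NatTrans.comp_app, T.w_trans]

def chainDiag : {m : Ordinal.{v} // m < l} ⥤ C where
  obj m := (T.Fo m.1).obj A
  map {m m'} h := (T.w (leOfHom h : m.1 ≤ m'.1)).app A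
  map_id m := by
    have := congrArg (fun t => NatTrans.app t A) (T.w_refl m.1)
    simpa using this
  map_comp {m n p} f g := by
    rw [w_trans_app]

def chainCocone : Cocone (chainDiag T l A) where
  pt := (T.Fo l).obj A
  ι :=
    { app := fun m => (T.w m.2.le).app A
      naturality := fun m m' h => by
        simp only [chainDiag, Functor.const_obj_obj, Functor.const_obj_map, Category.comp_id]
        rw [w_trans_app] }

noncomputable def chainIsColimit (hl : Order.IsSuccLimit l) : IsColimit (chainCocone T l A) := by
  have spec : ∀ s : Cocone (chainDiag T l A),
      ∃! k : (T.Fo l).obj A ⟶ s.pt,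
        ∀ (m : Ordinal.{v}) (h : m < l), (T.w h.le).app A ≫ k = s.ι.app ⟨m, h⟩ := by
    intro s
    refine T.limit_exists_unique l hl A s.pt (fun m h => s.ι.app ⟨m, h⟩) ?_
    intro m m' h h'
    exact s.w (homOfLE (Subtype.mk_le_mk.mpr h : (⟨m, lt_of_le_of_lt h h'⟩ : {m // m < l}) ≤ ⟨m', h'⟩))
  exact
    { desc := fun s => (spec s).choose
      fac := fun s m => (spec s).choose_spec.1 m.1 m.2
      uniq := fun s f hf => (spec s).choose_spec.2 f (fun m h => hf ⟨m, h⟩) }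

end Aux

/-- If `F` preserves colimits of `λ`-indexed chains for an infinite limit ordinal `λ`, then the
free-algebra construction stops after `λ` steps: the connecting natural transformation
`w_{λ,λ+1} : F_λ ⟶ F_{λ+1} = F F_λ + Id` is a natural isomorphism. -/
theorem construction_stops {C : Type u} [Category.{v} C] [HasColimits C] (F : C ⥤ C)
    (T : TermConstruction F) (l : Ordinal.{v}) (hl : Order.IsSuccLimit l)
    [PreservesColimitsOfShape {m : Ordinal.{v} // m < l} F] :
    IsIso (T.w (le_self_add : l ≤ l + 1)) := by
  have hsucc : ∀ m : Ordinal.{v}, m < l → m + 1 ≤ l := fun m h => by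
    rw [Ordinal.add_one_eq_succ]; exact (hl.succ_lt h).le
  have key : ∀ A : C, IsIso ((T.w ((le_self_add : l ≤ l + 1))).app A) := by
    intro A
    have hc : IsColimit (chainCocone T l A) := chainIsColimit T l A hl
    have hFc : IsColimit (F.mapCocone (chainCocone T l A)) := isColimitOfPreserves F hc
    -- cocone for β
    let t : Cocone (chainDiag T l A ⋙ F) :=
      { pt := (T.Fo l).obj A
        ι :=
          { app := fun m => (T.q m.1).app A ≫ (T.w (hsucc m.1 m.2)).app A
            naturality := fun m m' h => by
              simp only [Functor.comp_map, Functor.const_obj_obj, Functor.const_obj_map,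
                Category.comp_id, chainDiag]
              have hq := congrArg (fun t => NatTrans.app t A) (T.q_w (leOfHom h : m.1 ≤ m'.1))
              simp only [NatTrans.comp_app, Functor.whiskerRight_app] at hq
              rw [← Category.assoc, hq, Category.assoc, w_trans_app] } }
    let β : F.obj ((T.Fo l).obj A) ⟶ (T.Fo l).obj A := hFc.desc t
    have hβ : ∀ m : {m : Ordinal.{v} // m < l},
        F.map ((T.w m.2.le).app A) ≫ β = (T.q m.1).app A ≫ (T.w (hsucc m.1 m.2)).app A :=
      fun m => hFc.fac t m
    obtain ⟨hbin⟩ := T.succ_isColimit l A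
    let k : (T.Fo (l + 1)).obj A ⟶ (T.Fo l).obj A :=
      hbin.desc (BinaryCofan.mk β ((T.ι l).app A))
    have hkq : (T.q l).app A ≫ k = β := hbin.fac _ ⟨WalkingPair.left⟩
    have hkι : (T.ι (l + 1)).app A ≫ k = (T.ι l).app A := hbin.fac _ ⟨WalkingPair.right⟩
    have ι_w_app : ∀ {m n : Ordinal.{v}} (h : m ≤ n),
        (T.ι m).app A ≫ (T.w h).app A = (T.ι n).app A := fun h => by
      rw [← NatTrans.comp_app, T.ι_w]
    -- step lemma
    have step : ∀ (m : Ordinal.{v}) (h : m < l),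
        (T.w (add_le_add_left h.le 1)).app A ≫ k = (T.w (hsucc m h)).app A := by
      intro m h
      obtain ⟨hb⟩ := T.succ_isColimit m A
      apply hb.hom_ext
      rintro ⟨(_ | _)⟩ <;>
        simp only [BinaryCofan.mk, pair_obj_left, pair_obj_right, BinaryCofan.ι_app_left,
          BinaryCofan.ι_app_right]
      · -- q m component
        have hq := congrArg (fun t => NatTrans.app t A) (T.q_w (h.le : m ≤ l))
        simp only [NatTrans.comp_app, Functor.whiskerRight_app] at hq
        show (T.q m).app A ≫ (T.w _).app A ≫ k = (T.q m).app A ≫ (T.w _).app A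
        rw [← Category.assoc, ← hq, Category.assoc, hkq, hβ ⟨m, h⟩]
      · show (T.ι (m + 1)).app A ≫ (T.w _).app A ≫ k = (T.ι (m + 1)).app A ≫ (T.w _).app A
        rw [← Category.assoc, ι_w_app, hkι, ι_w_app]
    refine ⟨k, ?_, ?_⟩
    · -- w ≫ k = 𝟙
      apply hc.hom_ext
      intro m
      show (T.w m.2.le).app A ≫ (T.w _).app A ≫ k = (T.w m.2.le).app A ≫ 𝟙 _
      have h1 : m.1 ≤ m.1 + 1 := le_self_add
      have h2 : m.1 + 1 ≤ l + 1 := add_le_add_left m.2.le 1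
      rw [Category.comp_id]
      calc (T.w m.2.le).app A ≫ (T.w ((le_self_add : l ≤ l + 1))).app A ≫ k
          = ((T.w h1).app A ≫ (T.w h2).app A) ≫ k := by
            rw [← Category.assoc, w_trans_app, w_trans_app]
        _ = (T.w h1).app A ≫ (T.w h2).app A ≫ k := Category.assoc _ _ _
        _ = (T.w h1).app A ≫ (T.w (hsucc m.1 m.2)).app A := by rw [step m.1 m.2]
        _ = (T.w m.2.le).app A := w_trans_app T A h1 (hsucc m.1 m.2)
    · -- k ≫ w = 𝟙
      apply hbin.hom_ext
      rintro ⟨(_ | _)⟩ <;>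
        simp only [BinaryCofan.mk, pair_obj_left, pair_obj_right, BinaryCofan.ι_app_left,
          BinaryCofan.ι_app_right]
      · show (T.q l).app A ≫ k ≫ (T.w _).app A = (T.q l).app A ≫ 𝟙 _
        rw [Category.comp_id, ← Category.assoc, hkq]
        apply hFc.hom_ext
        intro m
        have fac : (F.mapCocone (chainCocone T l A)).ι.app m = F.map ((T.w m.2.le).app A) := rfl
        rw [fac]
        show F.map ((T.w m.2.le).app A) ≫ β ≫ (T.w (le_self_add : l ≤ l + 1)).app A = F.map ((T.w m.2.le).app A) ≫ (T.q l).app A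
        rw [← Category.assoc, hβ m, Category.assoc, w_trans_app]
        have hq := congrArg (fun t => NatTrans.app t A) (T.q_w (m.2.le : m.1 ≤ l))
        simp only [NatTrans.comp_app, Functor.whiskerRight_app] at hq
        exact hq.symm
      · show (T.ι (l + 1)).app A ≫ k ≫ (T.w _).app A = (T.ι (l + 1)).app A ≫ 𝟙 _
        rw [Category.comp_id, ← Category.assoc, hkι, ι_w_app]
  exact @NatIso.isIso_of_isIso_app _ _ _ _ _ _ _ key
end

section
/- Let F preserve colimits of λ-chains on a cocomplete category C, with free-algebra construction stopping at λ, and set υ = colim_{n<λ} q_n : F F_λ → F_λ. Then for every object A, the algebra (F_λ A, υ_A) together with the unit ι_{λ,A} : A → F_λ A is a free F-algebra on A: for every F-algebra (B, β) and every morphism f : A → B there is a unique F-algebra morphism g : (F_λ A, υ_A) → (B, β) with g ∘ ι_{λ,A} = f. -/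
open CategoryTheory CategoryTheory.Limits

universe v u

namespace FreeAlgAux

variable {C : Type u} [Category.{v} C] {F : C ⥤ C} (T : TermConstruction F) {A : C}

lemma le_add_one (m : Ordinal.{v}) : m ≤ m + 1 :=
  (Order.le_succ m).trans_eq (Ordinal.add_one_eq_succ m).symm

lemma lt_add_one' (m : Ordinal.{v}) : m < m + 1 := by
  rw [Ordinal.add_one_eq_succ]; exact Order.lt_succ m

lemma w_app_w_app {m n p : Ordinal.{v}} (h₁ : m ≤ n) (h₂ : n ≤ p) :
    (T.w h₁).app A ≫ (T.w h₂).app A = (T.w (h₁.trans h₂)).app A := by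
  rw [← NatTrans.comp_app, T.w_trans]

lemma w_w_assoc {m n p : Ordinal.{v}} (h₁ : m ≤ n) (h₂ : n ≤ p) {X : C}
    (x : (T.Fo p).obj A ⟶ X) :
    (T.w h₁).app A ≫ (T.w h₂).app A ≫ x = (T.w (h₁.trans h₂)).app A ≫ x := by
  rw [← Category.assoc, w_app_w_app]

lemma ι_w_app {m n : Ordinal.{v}} (h : m ≤ n) :
    (T.ι m).app A ≫ (T.w h).app A = (T.ι n).app A := by
  rw [← NatTrans.comp_app, T.ι_w]

lemma ι_w_assoc {m n : Ordinal.{v}} (h : m ≤ n) {X : C} (x : (T.Fo n).obj A ⟶ X) :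
    (T.ι m).app A ≫ (T.w h).app A ≫ x = (T.ι n).app A ≫ x := by
  rw [← Category.assoc, ι_w_app]

lemma q_w_assoc {m n : Ordinal.{v}} (h : m ≤ n) {X : C} (x : (T.Fo (n + 1)).obj A ⟶ X) :
    (T.q m).app A ≫ (T.w (add_le_add_left h 1)).app A ≫ x
      = F.map ((T.w h).app A) ≫ (T.q n).app A ≫ x := by
  have e := congrArg (fun t => NatTrans.app t A) (T.q_w h)
  simp only [NatTrans.comp_app, Functor.whiskerRight_app] at e
  rw [← Category.assoc, ← e, Category.assoc]

variable {B : C} (β : F.obj B ⟶ B) (f : A ⟶ B)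

/-- `k : Fₙ A ⟶ B` is a "good" partial solution towards the algebra `(B, β)` under `f`. -/
def Good (n : Ordinal.{v}) (k : (T.Fo n).obj A ⟶ B) : Prop :=
  (T.ι n).app A ≫ k = f ∧
  ∀ (m : Ordinal.{v}) (h : m + 1 ≤ n),
    (T.q m).app A ≫ (T.w h).app A ≫ k
      = F.map ((T.w ((le_add_one m).trans h)).app A ≫ k) ≫ β

lemma Good.restrict {n : Ordinal.{v}} {k : (T.Fo n).obj A ⟶ B}
    (hk : Good T β f n k) {m : Ordinal.{v}} (h : m ≤ n) :
    Good T β f m ((T.w h).app A ≫ k) := by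
  constructor
  · rw [← Category.assoc, ι_w_app, hk.1]
  · intro s hs
    calc (T.q s).app A ≫ (T.w hs).app A ≫ (T.w h).app A ≫ k
        = (T.q s).app A ≫ (T.w (hs.trans h)).app A ≫ k := by
          rw [w_w_assoc]
      _ = F.map ((T.w ((le_add_one s).trans (hs.trans h))).app A ≫ k) ≫ β :=
          hk.2 s (hs.trans h)
      _ = F.map ((T.w ((le_add_one s).trans hs)).app A ≫ (T.w h).app A ≫ k) ≫ β := by
          rw [w_w_assoc]

theorem exists_unique_good (n : Ordinal.{v}) :
    ∃! k : (T.Fo n).obj A ⟶ B, Good T β f n k := by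
  induction n using Ordinal.induction with
  | h n IH =>
  rcases Ordinal.zero_or_succ_or_isSuccLimit n with rfl | ⟨p, hp⟩ | hn
  · -- zero case
    haveI : IsIso (T.ι 0) := T.iso0
    refine ⟨inv ((T.ι 0).app A) ≫ f, ⟨by simp, ?_⟩, ?_⟩
    · intro m h
      exact absurd (nonpos_iff_eq_zero.mp h)
        (by rw [Ordinal.add_one_eq_succ]; exact Ordinal.succ_ne_zero m)
    · rintro k' ⟨h1, -⟩
      rw [← h1, IsIso.inv_hom_id_assoc]
  · -- successor case
    rw [← Ordinal.add_one_eq_succ] at hp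
    subst hp
    obtain ⟨kp, hkp, hkpu⟩ := IH p (lt_add_one' p)
    obtain ⟨hc⟩ := T.succ_isColimit p A
    set k : (T.Fo (p + 1)).obj A ⟶ B :=
      hc.desc (BinaryCofan.mk (F.map kp ≫ β) f) with hkdef
    have hq : (T.q p).app A ≫ k = F.map kp ≫ β := hc.fac _ ⟨WalkingPair.left⟩
    have hι : (T.ι (p + 1)).app A ≫ k = f := hc.fac _ ⟨WalkingPair.right⟩
    have R : ∀ m (h : m ≤ p),
        (T.w (h.trans (le_add_one p))).app A ≫ k = (T.w h).app A ≫ kp := by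
      intro m
      induction m using Ordinal.induction with
      | h m IHm =>
      intro h
      rcases Ordinal.zero_or_succ_or_isSuccLimit m with rfl | ⟨s, hs⟩ | hm
      · haveI : IsIso (T.ι 0) := T.iso0
        rw [← cancel_epi ((T.ι 0).app A), ι_w_assoc, ι_w_assoc, hι, hkp.1]
      · rw [← Ordinal.add_one_eq_succ] at hs
        subst hs
        obtain ⟨hcs⟩ := T.succ_isColimit s A
        have hsp : s ≤ p := (le_add_one s).trans h
        refine BinaryCofan.IsColimit.hom_ext hcs ?_ ?_
        · show (T.q s).app A ≫ _ = (T.q s).app A ≫ _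
          rw [q_w_assoc T hsp, hq, hkp.2 s h, F.map_comp, Category.assoc]
        · show (T.ι (s + 1)).app A ≫ _ = (T.ι (s + 1)).app A ≫ _
          rw [ι_w_assoc, ι_w_assoc, hι, hkp.1]
      · obtain ⟨k₀, hk₀, hk₀u⟩ := T.limit_exists_unique m hm A B
          (fun m' h' => (T.w (h'.le.trans h)).app A ≫ kp)
          (fun m₁ m₂ h₁₂ h₂ => w_w_assoc T _ _ _)
        trans k₀
        · refine hk₀u _ ?_
          intro m' h'
          rw [w_w_assoc]
          exact IHm m' h' (h'.le.trans h)
        · refine (hk₀u _ ?_).symm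
          intro m' h'
          rw [w_w_assoc]
    refine ⟨k, ⟨hι, ?_⟩, ?_⟩
    · intro m h
      have hmp : m ≤ p := by
        rw [Ordinal.add_one_eq_succ, Ordinal.add_one_eq_succ] at h
        exact Order.succ_le_succ_iff.mp h
      rw [q_w_assoc T hmp, hq, R m hmp, F.map_comp, Category.assoc]
    · intro k' hk'
      have e := hk'.2 p (le_refl (p + 1))
      rw [T.w_refl] at e
      simp only [NatTrans.id_app, Category.id_comp] at e
      have hres : (T.w ((le_add_one p).trans (le_refl (p + 1)))).app A ≫ k' = kp :=
        hkpu _ (hk'.restrict T β f (le_add_one p))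
      rw [hres] at e
      refine BinaryCofan.IsColimit.hom_ext hc ?_ ?_
      · show (T.q p).app A ≫ _ = (T.q p).app A ≫ _
        rw [e, hq]
      · show (T.ι (p + 1)).app A ≫ _ = (T.ι (p + 1)).app A ≫ _
        rw [hk'.1, hι]
  · -- limit case
    have H : ∀ m, m < n → ∃! k : (T.Fo m).obj A ⟶ B, Good T β f m k := fun m hm => IH m hm
    have hgood : ∀ m (hm : m < n), Good T β f m (Exists.choose (H m hm)) :=
      fun m hm => (Exists.choose_spec (H m hm)).1
    have huniq : ∀ m (hm : m < n) y, Good T β f m y → y = Exists.choose (H m hm) :=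
      fun m hm y hy => (Exists.choose_spec (H m hm)).2 y hy
    have hcompat : ∀ (m m' : Ordinal.{v}) (h : m ≤ m') (h' : m' < n),
        (T.w h).app A ≫ Exists.choose (H m' h') = Exists.choose (H m (lt_of_le_of_lt h h')) :=
      fun m m' h h' => huniq m (lt_of_le_of_lt h h') _ ((hgood m' h').restrict T β f h)
    obtain ⟨k, hk, hku⟩ := T.limit_exists_unique n hn A B (fun m hm => Exists.choose (H m hm))
      hcompat
    refine ⟨k, ⟨?_, ?_⟩, ?_⟩
    · have h0 : (0 : Ordinal.{v}) < n := by
          have := hn.bot_lt; rwa [Ordinal.bot_eq_zero] at this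
      rw [← ι_w_app T h0.le, Category.assoc, hk 0 h0]
      exact (hgood 0 h0).1
    · intro m h
      have hm : m < n := lt_of_lt_of_le (lt_add_one' m) h
      have hm1 : m + 1 < n := by rw [Ordinal.add_one_eq_succ]; exact hn.succ_lt hm
      have e := (hgood (m + 1) hm1).2 m (le_refl (m + 1))
      rw [T.w_refl] at e
      simp only [NatTrans.id_app, Category.id_comp] at e
      rw [hcompat m (m + 1) (le_add_one m) hm1] at e
      rw [hk (m + 1) hm1, hk m hm] at *
      rw [e]
    · intro k' hk'
      exact hku k' (fun m hm => huniq m hm _ (hk'.restrict T β f hm.le))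

/-- The `λ`-chain of term functors evaluated at `A`. -/
@[simps]
def chain (l : Ordinal.{v}) (A : C) : {m : Ordinal.{v} // m < l} ⥤ C where
  obj m := (T.Fo m.1).obj A
  map {m m'} h := (T.w (show m.1 ≤ m'.1 from leOfHom h)).app A
  map_id m := by
    change (T.w (le_refl m.1)).app A = _
    rw [T.w_refl]; rfl
  map_comp {m₁ m₂ m₃} h₁ h₂ := (w_app_w_app T _ _).symm

/-- The colimit cocone over the chain with apex `Fₗ A`. -/
@[simps]
def chainCocone (l : Ordinal.{v}) (A : C) : Cocone (chain T l A) where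
  pt := (T.Fo l).obj A
  ι :=
    { app := fun m => (T.w m.2.le).app A
      naturality := fun m m' h => by
        dsimp [chain]
        rw [w_app_w_app, Category.comp_id] }

/-- `Fₗ A` really is the colimit of the chain, by `limit_exists_unique`. -/
noncomputable def chainIsColimit (l : Ordinal.{v}) (hl : Order.IsSuccLimit l) (A : C) :
    IsColimit (chainCocone T l A) where
  desc s := Exists.choose (T.limit_exists_unique l hl A s.pt
    (fun m hm => s.ι.app ⟨m, hm⟩)
    (fun m m' h h' => s.w (homOfLE (Subtype.mk_le_mk.mpr h))))
  fac s m := (Exists.choose_spec (T.limit_exists_unique l hl A s.pt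
    (fun m hm => s.ι.app ⟨m, hm⟩)
    (fun m m' h h' => s.w (homOfLE (Subtype.mk_le_mk.mpr h))))).1 m.1 m.2
  uniq s k hk := (Exists.choose_spec (T.limit_exists_unique l hl A s.pt
    (fun m hm => s.ι.app ⟨m, hm⟩)
    (fun m m' h h' => s.w (homOfLE (Subtype.mk_le_mk.mpr h))))).2 k
      (fun m hm => hk ⟨m, hm⟩)

end FreeAlgAux

/-- Let `F` preserve colimits of `λ`-chains, so that the free-algebra construction stops at
`λ`, and let `υ = colim_{n<λ} qₙ : F F_λ ⟶ F_λ` (characterized componentwise by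
`υ ∘ F w_{n,λ} = w_{n+1,λ} ∘ qₙ` for all `n < λ`).  Then for every object `A`, the algebra
`(F_λ A, υ_A)` with unit `ι_{λ,A} : A ⟶ F_λ A` is a free `F`-algebra on `A`: for every
`F`-algebra `(B, β)` and every `f : A ⟶ B` there is a unique `F`-algebra morphism
`g : (F_λ A, υ_A) ⟶ (B, β)` with `g ∘ ι_{λ,A} = f`. -/
theorem free_algebra_in_AlgF {C : Type u} [Category.{v} C] [HasColimits C] (F : C ⥤ C)
    (T : TermConstruction F) (l : Ordinal.{v}) (hl : Order.IsSuccLimit l)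
    [PreservesColimitsOfShape {m : Ordinal.{v} // m < l} F]
    (υ : T.Fo l ⋙ F ⟶ T.Fo l)
    (hυ : ∀ (n : Ordinal.{v}) (hn : n < l) (hn1 : n + 1 ≤ l) (A : C),
      F.map ((T.w hn.le).app A) ≫ υ.app A = (T.q n).app A ≫ (T.w hn1).app A)
    (A : C) :
    ∀ (B : C) (β : F.obj B ⟶ B) (f : A ⟶ B),
      ∃! g : (T.Fo l).obj A ⟶ B,
        υ.app A ≫ g = F.map g ≫ β ∧ (T.ι l).app A ≫ g = f := by
  intro B β f
  obtain ⟨g, hg, hgu⟩ := FreeAlgAux.exists_unique_good T β f l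
  have hcl : IsColimit (F.mapCocone (FreeAlgAux.chainCocone T l A)) :=
    isColimitOfPreserves F (FreeAlgAux.chainIsColimit T l hl A)
  have hext : ∀ x y : F.obj ((T.Fo l).obj A) ⟶ B,
      (∀ (m : Ordinal.{v}) (hm : m < l),
        F.map ((T.w hm.le).app A) ≫ x = F.map ((T.w hm.le).app A) ≫ y) → x = y := by
    intro x y hxy
    refine hcl.hom_ext fun m => ?_
    exact hxy m.1 m.2
  refine ⟨g, ⟨?_, hg.1⟩, ?_⟩
  · apply hext
    intro m hm
    have hm1 : m + 1 ≤ l := by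
      rw [Ordinal.add_one_eq_succ]; exact (hl.succ_lt hm).le
    rw [← Category.assoc, hυ m hm hm1 A, Category.assoc, hg.2 m hm1, F.map_comp,
      Category.assoc]
  · rintro g' ⟨hc, hu⟩
    refine hgu g' ⟨hu, ?_⟩
    intro m h
    have hm : m < l := lt_of_lt_of_le (FreeAlgAux.lt_add_one' m) h
    rw [← Category.assoc, ← hυ m hm h A, Category.assoc, hc, ← Category.assoc, ← F.map_comp]
end

section
/- Let F preserve colimits of λ-chains on a cocomplete category C. Then F_λ carries a monad structure M(F) = (F_λ, η^F, μ^F) with η^F = ι_λ and μ^F = Z_F ε_λ V_F (where V_F ⊣ Z_F is the free-forgetful adjunction for F-algebras), and this monad together with y_λ : F → F_λ is the free monad on F: for every monad T = (T, η^T, μ^T) on C and every natural transformation ρ : F → T there is a unique monad morphism σ : M(F) → T with σ ∘ y_λ = ρ. -/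
open CategoryTheory CategoryTheory.Limits

universe v u

namespace FreeMonadAux

variable {C : Type u} [Category.{v} C] {F : C ⥤ C} (T : TermConstruction F)

lemma succ_hom_ext {n : Ordinal.{v}} {A X : C} {f g : (T.Fo (n + 1)).obj A ⟶ X}
    (hq : (T.q n).app A ≫ f = (T.q n).app A ≫ g)
    (hι : (T.ι (n + 1)).app A ≫ f = (T.ι (n + 1)).app A ≫ g) : f = g := by
  obtain ⟨hc⟩ := T.succ_isColimit n A
  exact BinaryCofan.IsColimit.hom_ext hc hq hι

lemma limit_hom_ext {n : Ordinal.{v}} (hn : Order.IsSuccLimit n) {A X : C} {f g : (T.Fo n).obj A ⟶ X}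
    (h : ∀ (m : Ordinal.{v}) (hm : m < n), (T.w hm.le).app A ≫ f = (T.w hm.le).app A ≫ g) :
    f = g := by
  obtain ⟨k, -, hu⟩ := T.limit_exists_unique n hn A X (fun m hm => (T.w hm.le).app A ≫ g)
    (fun m m' hmm' h' => by
      rw [← Category.assoc, ← NatTrans.comp_app, T.w_trans])
  rw [hu f (fun m hm => h m hm), hu g (fun m hm => rfl)]

lemma eps_zero [IsIso (T.ι 0)] {A : C} {α : F.obj A ⟶ A} (E : TermEval F T A α) :
    E.ε 0 = inv ((T.ι 0).app A) :=
  IsIso.eq_inv_of_hom_inv_id E.ε_zero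

lemma iota_eps {l : Ordinal.{v}} (hl : Order.IsSuccLimit l) {A : C} {α : F.obj A ⟶ A}
    (E : TermEval F T A α) : (T.ι l).app A ≫ E.ε l = 𝟙 A := by
  have h0 : (0 : Ordinal.{v}) < l := hl.pos
  have hh : (T.ι l).app A = (T.ι 0).app A ≫ (T.w h0.le).app A := by
    rw [← NatTrans.comp_app, T.ι_w]
  rw [hh, Category.assoc, E.ε_limit l hl 0 h0, E.ε_zero]

lemma epsNat {A B : C} {α : F.obj A ⟶ A} {β : F.obj B ⟶ B}
    (EA : TermEval F T A α) (EB : TermEval F T B β) {h : A ⟶ B}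
    (hh : α ≫ h = F.map h ≫ β) (m : Ordinal.{v}) :
    (T.Fo m).map h ≫ EB.ε m = EA.ε m ≫ h := by
  induction m using Ordinal.induction with
  | _ m IH =>
  rcases Ordinal.zero_or_succ_or_isSuccLimit m with rfl | ⟨a, ha⟩ | hlim
  · haveI := T.iso0
    rw [eps_zero T EA, eps_zero T EB, IsIso.comp_inv_eq, Category.assoc, IsIso.eq_inv_comp]
    simpa using ((T.ι 0).naturality h).symm
  · have ha' : m = a + 1 := ha.symm
    subst ha'
    have haa : a < a + 1 := by rw [Ordinal.add_one_eq_succ]; exact Order.lt_succ a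
    apply succ_hom_ext T
    · calc (T.q a).app A ≫ (T.Fo (a + 1)).map h ≫ EB.ε (a + 1)
          = ((T.Fo a ⋙ F).map h ≫ (T.q a).app B) ≫ EB.ε (a + 1) := by
            rw [(T.q a).naturality h, Category.assoc]
        _ = F.map ((T.Fo a).map h) ≫ (T.q a).app B ≫ EB.ε (a + 1) := by
            simp [Category.assoc]
        _ = F.map ((T.Fo a).map h) ≫ F.map (EB.ε a) ≫ β := by rw [EB.ε_succ_q a]
        _ = F.map ((T.Fo a).map h ≫ EB.ε a) ≫ β := by rw [F.map_comp, Category.assoc]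
        _ = F.map (EA.ε a ≫ h) ≫ β := by rw [IH a haa]
        _ = F.map (EA.ε a) ≫ F.map h ≫ β := by rw [F.map_comp, Category.assoc]
        _ = F.map (EA.ε a) ≫ α ≫ h := by rw [hh]
        _ = ((T.q a).app A ≫ EA.ε (a + 1)) ≫ h := by rw [EA.ε_succ_q a, Category.assoc]
        _ = (T.q a).app A ≫ EA.ε (a + 1) ≫ h := by rw [Category.assoc]
    · calc (T.ι (a + 1)).app A ≫ (T.Fo (a + 1)).map h ≫ EB.ε (a + 1)
          = ((𝟭 C).map h ≫ (T.ι (a + 1)).app B) ≫ EB.ε (a + 1) := by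
            rw [(T.ι (a + 1)).naturality h, Category.assoc]
        _ = h ≫ (T.ι (a + 1)).app B ≫ EB.ε (a + 1) := by simp
        _ = h := by rw [EB.ε_succ_ι a, Category.comp_id]
        _ = ((T.ι (a + 1)).app A ≫ EA.ε (a + 1)) ≫ h := by
            rw [EA.ε_succ_ι a]; simp
        _ = (T.ι (a + 1)).app A ≫ EA.ε (a + 1) ≫ h := by rw [Category.assoc]
  · apply limit_hom_ext T hlim
    intro k hk
    calc (T.w hk.le).app A ≫ (T.Fo m).map h ≫ EB.ε m
        = ((T.Fo k).map h ≫ (T.w hk.le).app B) ≫ EB.ε m := by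
          rw [(T.w hk.le).naturality h, Category.assoc]
      _ = (T.Fo k).map h ≫ EB.ε k := by rw [Category.assoc, EB.ε_limit m hlim k hk]
      _ = EA.ε k ≫ h := IH k hk
      _ = ((T.w hk.le).app A ≫ EA.ε m) ≫ h := by rw [EA.ε_limit m hlim k hk]
      _ = (T.w hk.le).app A ≫ EA.ε m ≫ h := by rw [Category.assoc]


def chain (l : Ordinal.{v}) (B : C) : {m : Ordinal.{v} // m < l} ⥤ C where
  obj m := (T.Fo m.1).obj B
  map {m m'} f := (T.w (leOfHom f : m.1 ≤ m'.1)).app B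
  map_id m := by
    rw [T.w_refl]
    rfl
  map_comp f g := by rw [← NatTrans.comp_app, T.w_trans]

def chainCocone (l : Ordinal.{v}) (B : C) : Cocone (chain T l B) where
  pt := (T.Fo l).obj B
  ι :=
    { app := fun m => (T.w m.2.le).app B
      naturality := fun m m' f => by
        dsimp [chain]
        rw [← NatTrans.comp_app, T.w_trans, Category.comp_id] }

lemma chain_compat (l : Ordinal.{v}) (t : Cocone (chain T l B)) :
    ∀ (m m' : Ordinal.{v}) (h : m ≤ m') (h' : m' < l),
      (T.w h).app B ≫ t.ι.app ⟨m', h'⟩ = t.ι.app ⟨m, lt_of_le_of_lt h h'⟩ := by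
  intro m m' h h'
  have := t.ι.naturality
    (homOfLE (show (⟨m, lt_of_le_of_lt h h'⟩ : {x : Ordinal.{v} // x < l}) ≤ ⟨m', h'⟩ from h))
  simpa [chain] using this

noncomputable def chainIsColimit (l : Ordinal.{v}) (hl : Order.IsSuccLimit l) (B : C) :
    IsColimit (chainCocone T l B) where
  desc t := (T.limit_exists_unique l hl B t.pt (fun m hm => t.ι.app ⟨m, hm⟩)
    (chain_compat T l t)).choose
  fac t j := (T.limit_exists_unique l hl B t.pt (fun m hm => t.ι.app ⟨m, hm⟩)
    (chain_compat T l t)).choose_spec.1 j.1 j.2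
  uniq t k hk := (T.limit_exists_unique l hl B t.pt (fun m hm => t.ι.app ⟨m, hm⟩)
    (chain_compat T l t)).choose_spec.2 k (fun m hm => hk ⟨m, hm⟩)

lemma F_hom_ext (l : Ordinal.{v}) (hl : Order.IsSuccLimit l)
    [PreservesColimitsOfShape {m : Ordinal.{v} // m < l} F]
    {B X : C} {f g : F.obj ((T.Fo l).obj B) ⟶ X}
    (h : ∀ (m : Ordinal.{v}) (hm : m < l),
      F.map ((T.w hm.le).app B) ≫ f = F.map ((T.w hm.le).app B) ≫ g) : f = g := by
  have hc := isColimitOfPreserves F (chainIsColimit T l hl B)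
  exact hc.hom_ext (fun j => by dsimp [chainCocone]; exact h j.1 j.2)

lemma upsilon_eps (l : Ordinal.{v}) (hl : Order.IsSuccLimit l)
    [PreservesColimitsOfShape {m : Ordinal.{v} // m < l} F]
    (υ : T.Fo l ⋙ F ⟶ T.Fo l)
    (hυ : ∀ (n : Ordinal.{v}) (hn : n < l) (hn1 : n + 1 ≤ l) (A : C),
      F.map ((T.w hn.le).app A) ≫ υ.app A = (T.q n).app A ≫ (T.w hn1).app A)
    {B : C} {β : F.obj B ⟶ B} (E : TermEval F T B β) :
    υ.app B ≫ E.ε l = F.map (E.ε l) ≫ β := by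
  apply F_hom_ext T l hl
  intro m hm
  have hm1 : m + 1 < l := by rw [Ordinal.add_one_eq_succ]; exact hl.succ_lt hm
  calc F.map ((T.w hm.le).app B) ≫ υ.app B ≫ E.ε l
      = ((T.q m).app B ≫ (T.w hm1.le).app B) ≫ E.ε l := by
        rw [← Category.assoc, hυ m hm hm1.le B]
    _ = (T.q m).app B ≫ E.ε (m + 1) := by rw [Category.assoc, E.ε_limit l hl (m + 1) hm1]
    _ = F.map (E.ε m) ≫ β := E.ε_succ_q m
    _ = F.map ((T.w hm.le).app B ≫ E.ε l) ≫ β := by rw [E.ε_limit l hl m hm]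
    _ = F.map ((T.w hm.le).app B) ≫ F.map (E.ε l) ≫ β := by rw [F.map_comp, Category.assoc]

lemma map_iota (l : Ordinal.{v}) (hl : Order.IsSuccLimit l)
    (υ : T.Fo l ⋙ F ⟶ T.Fo l)
    (hυ : ∀ (n : Ordinal.{v}) (hn : n < l) (hn1 : n + 1 ≤ l) (A : C),
      F.map ((T.w hn.le).app A) ≫ υ.app A = (T.q n).app A ≫ (T.w hn1).app A)
    (A : C) (E : TermEval F T ((T.Fo l).obj A) (υ.app A))
    (g : A ⟶ (T.Fo l).obj A) (hg : g = (T.ι l).app A) :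
    ∀ (m : Ordinal.{v}) (hm : m < l),
      (T.Fo m).map g ≫ E.ε m = (T.w hm.le).app A := by
  intro m
  induction m using Ordinal.induction with
  | _ m IH =>
  intro hm
  rcases Ordinal.zero_or_succ_or_isSuccLimit m with rfl | ⟨a, ha⟩ | hlim
  · haveI := T.iso0
    rw [eps_zero T E, IsIso.comp_inv_eq, ← cancel_epi ((T.ι 0).app A)]
    have hnat : g ≫ (T.ι 0).app ((T.Fo l).obj A) =
        (T.ι 0).app A ≫ (T.Fo 0).map g := by
      simpa using (T.ι 0).naturality g
    have hiw : (T.ι 0).app A ≫ (T.w hm.le).app A = g := by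
      rw [hg, ← NatTrans.comp_app, T.ι_w]
    rw [← hnat, ← Category.assoc, hiw]
  · have ha' : m = a + 1 := ha.symm
    subst ha'
    have haa : a < a + 1 := by rw [Ordinal.add_one_eq_succ]; exact Order.lt_succ a
    have hal : a < l := lt_trans haa hm
    apply succ_hom_ext T
    · calc (T.q a).app A ≫ (T.Fo (a + 1)).map g ≫ E.ε (a + 1)
          = ((T.Fo a ⋙ F).map g ≫ (T.q a).app ((T.Fo l).obj A)) ≫
              E.ε (a + 1) := by rw [(T.q a).naturality g, Category.assoc]
        _ = F.map ((T.Fo a).map g) ≫ (T.q a).app ((T.Fo l).obj A) ≫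
              E.ε (a + 1) := by simp [Category.assoc]
        _ = F.map ((T.Fo a).map g) ≫ F.map (E.ε a) ≫ υ.app A := by
            rw [E.ε_succ_q a]
        _ = F.map ((T.Fo a).map g ≫ E.ε a) ≫ υ.app A := by
            rw [F.map_comp, Category.assoc]
        _ = F.map ((T.w hal.le).app A) ≫ υ.app A := by rw [IH a haa hal]
        _ = (T.q a).app A ≫ (T.w hm.le).app A := hυ a hal hm.le A
    · calc (T.ι (a + 1)).app A ≫ (T.Fo (a + 1)).map g ≫ E.ε (a + 1)
          = (g ≫ (T.ι (a + 1)).app ((T.Fo l).obj A)) ≫ E.ε (a + 1) := by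
            rw [← Category.assoc]
            congr 1
            simpa using ((T.ι (a + 1)).naturality g).symm
        _ = g ≫ (T.ι (a + 1)).app ((T.Fo l).obj A) ≫ E.ε (a + 1) := by
            rw [Category.assoc]
        _ = g := by rw [E.ε_succ_ι a]; simp
        _ = (T.ι (a + 1)).app A ≫ (T.w hm.le).app A := by
            rw [hg, ← NatTrans.comp_app, T.ι_w]
  · apply limit_hom_ext T hlim
    intro k hk
    have hkl : k < l := lt_trans hk hm
    calc (T.w hk.le).app A ≫ (T.Fo m).map g ≫ E.ε m
        = ((T.Fo k).map g ≫ (T.w hk.le).app ((T.Fo l).obj A)) ≫ E.ε m := by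
          rw [(T.w hk.le).naturality g, Category.assoc]
      _ = (T.Fo k).map g ≫ E.ε k := by
          rw [Category.assoc, E.ε_limit m hlim k hk]
      _ = (T.w hkl.le).app A := IH k hk hkl
      _ = ((T.w hk.le) ≫ (T.w hm.le)).app A := by rw [T.w_trans]
      _ = (T.w hk.le).app A ≫ (T.w hm.le).app A := by rw [NatTrans.comp_app]

lemma hom_unique (l : Ordinal.{v}) (hl : Order.IsSuccLimit l)
    (υ : T.Fo l ⋙ F ⟶ T.Fo l)
    (hυ : ∀ (n : Ordinal.{v}) (hn : n < l) (hn1 : n + 1 ≤ l) (A : C),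
      F.map ((T.w hn.le).app A) ≫ υ.app A = (T.q n).app A ≫ (T.w hn1).app A)
    {A X : C} (e : F.obj X ⟶ X) {τ τ' : (T.Fo l).obj A ⟶ X}
    (h1 : (T.ι l).app A ≫ τ = (T.ι l).app A ≫ τ')
    (h2 : υ.app A ≫ τ = F.map τ ≫ e)
    (h2' : υ.app A ≫ τ' = F.map τ' ≫ e) : τ = τ' := by
  apply limit_hom_ext T hl
  suffices H : ∀ (m : Ordinal.{v}) (hm : m < l),
      (T.w hm.le).app A ≫ τ = (T.w hm.le).app A ≫ τ' from H
  intro m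
  induction m using Ordinal.induction with
  | _ m IH =>
  intro hm
  rcases Ordinal.zero_or_succ_or_isSuccLimit m with rfl | ⟨a, ha⟩ | hlim
  · haveI := T.iso0
    rw [← cancel_epi ((T.ι 0).app A), ← Category.assoc, ← NatTrans.comp_app, T.ι_w,
      ← Category.assoc, ← NatTrans.comp_app, T.ι_w]
    exact h1
  · have ha' : m = a + 1 := ha.symm
    subst ha'
    have haa : a < a + 1 := by rw [Ordinal.add_one_eq_succ]; exact Order.lt_succ a
    have hal : a < l := lt_trans haa hm
    apply succ_hom_ext T
    · have key : ∀ (σ : (T.Fo l).obj A ⟶ X), υ.app A ≫ σ = F.map σ ≫ e →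
          (T.q a).app A ≫ (T.w hm.le).app A ≫ σ = F.map ((T.w hal.le).app A ≫ σ) ≫ e := by
        intro σ hσ
        rw [← Category.assoc, ← hυ a hal hm.le A, Category.assoc, hσ, F.map_comp,
          Category.assoc]
      rw [key τ h2, key τ' h2', IH a haa hal]
    · rw [← Category.assoc, ← NatTrans.comp_app, T.ι_w, ← Category.assoc,
        ← NatTrans.comp_app, T.ι_w]
      exact h1
  · apply limit_hom_ext T hlim
    intro k hk
    rw [← Category.assoc, ← NatTrans.comp_app, T.w_trans, ← Category.assoc,
      ← NatTrans.comp_app, T.w_trans]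
    exact IH k hk (lt_of_lt_of_le hk hm.le)

lemma free_alg_hom (l : Ordinal.{v}) (hl : Order.IsSuccLimit l)
    [PreservesColimitsOfShape {m : Ordinal.{v} // m < l} F]
    (υ : T.Fo l ⋙ F ⟶ T.Fo l)
    (hυ : ∀ (n : Ordinal.{v}) (hn : n < l) (hn1 : n + 1 ≤ l) (A : C),
      F.map ((T.w hn.le).app A) ≫ υ.app A = (T.q n).app A ≫ (T.w hn1).app A)
    {A B : C} {β : F.obj B ⟶ B} (E : TermEval F T B β) (f : A ⟶ B) :
    υ.app A ≫ ((T.Fo l).map f ≫ E.ε l) = F.map ((T.Fo l).map f ≫ E.ε l) ≫ β := by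
  calc υ.app A ≫ (T.Fo l).map f ≫ E.ε l
      = ((T.Fo l ⋙ F).map f ≫ υ.app B) ≫ E.ε l := by
        rw [← Category.assoc, υ.naturality f]
    _ = F.map ((T.Fo l).map f) ≫ υ.app B ≫ E.ε l := by
        rw [Functor.comp_map, Category.assoc]
    _ = F.map ((T.Fo l).map f) ≫ F.map (E.ε l) ≫ β := by
        rw [upsilon_eps T l hl υ hυ E]
    _ = F.map ((T.Fo l).map f ≫ E.ε l) ≫ β := by rw [F.map_comp, Category.assoc]

end FreeMonadAux

open FreeMonadAux

/-- Let `F` preserve colimits of `λ`-chains.  Then `F_λ` carries a monad structure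
`M(F) = (F_λ, η, μ)` with unit `η = ι_λ` and multiplication `μ` given by term-evaluation on the
free algebras (`μ_A = ε_{λ,(F_λ A, υ_A)}`, i.e. `μ = Z_F ε_λ V_F`), and together with
`y_λ = w_{1,λ} ∘ q₀ : F ⟶ F_λ` it is the free monad on `F`: for every monad `M` on `C` and
every natural transformation `ρ : F ⟶ M` there is a unique monad morphism
`σ : F_λ ⟶ M` with `σ ∘ y_λ = ρ`. -/
theorem free_monad {C : Type u} [Category.{v} C] [HasColimits C] (F : C ⥤ C)
    (T : TermConstruction F) (l : Ordinal.{v}) (hl : Order.IsSuccLimit l)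
    [PreservesColimitsOfShape {m : Ordinal.{v} // m < l} F]
    (Ev : ∀ (A : C) (α : F.obj A ⟶ A), TermEval F T A α)
    (υ : T.Fo l ⋙ F ⟶ T.Fo l)
    (hυ : ∀ (n : Ordinal.{v}) (hn : n < l) (hn1 : n + 1 ≤ l) (A : C),
      F.map ((T.w hn.le).app A) ≫ υ.app A = (T.q n).app A ≫ (T.w hn1).app A)
    (y : F ⟶ T.Fo l) (h1 : (0 : Ordinal.{v}) + 1 ≤ l)
    (hy : ∀ A : C, y.app A = F.map ((T.ι 0).app A) ≫ (T.q 0).app A ≫ (T.w h1).app A) :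
    ∃ μ : T.Fo l ⋙ T.Fo l ⟶ T.Fo l,
      (∀ A : C, μ.app A = (Ev ((T.Fo l).obj A) (υ.app A)).ε l) ∧
      -- monad laws for (F_λ, ι l, μ)
      (∀ A : C, (T.ι l).app ((T.Fo l).obj A) ≫ μ.app A = 𝟙 ((T.Fo l).obj A)) ∧
      (∀ A : C, (T.Fo l).map ((T.ι l).app A) ≫ μ.app A = 𝟙 ((T.Fo l).obj A)) ∧
      (∀ A : C, (T.Fo l).map (μ.app A) ≫ μ.app A = μ.app ((T.Fo l).obj A) ≫ μ.app A) ∧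
      -- freeness
      (∀ (M : Monad C) (ρ : F ⟶ (M : C ⥤ C)),
        ∃! σ : T.Fo l ⟶ (M : C ⥤ C),
          ((∀ A : C, (T.ι l).app A ≫ σ.app A = M.η.app A) ∧
           (∀ A : C, μ.app A ≫ σ.app A =
              σ.app ((T.Fo l).obj A) ≫ (M : C ⥤ C).map (σ.app A) ≫ M.μ.app A)) ∧
          y ≫ σ = ρ) := by
  refine ⟨{ app := fun A => (Ev ((T.Fo l).obj A) (υ.app A)).ε l,
            naturality := fun A B f => ?_ }, fun A => rfl, ?_, ?_, ?_, ?_⟩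
  · exact epsNat T (Ev _ (υ.app A)) (Ev _ (υ.app B)) (υ.naturality f).symm l
  · intro A
    exact iota_eps T hl (Ev _ (υ.app A))
  · intro A
    obtain ⟨g, hg⟩ : ∃ g : A ⟶ (T.Fo l).obj A, g = (T.ι l).app A := ⟨_, rfl⟩
    have H : (T.Fo l).map g ≫ (Ev ((T.Fo l).obj A) (υ.app A)).ε l =
        𝟙 ((T.Fo l).obj A) := by
      apply limit_hom_ext T hl
      intro m hm
      have hmi := map_iota T l hl υ hυ A (Ev _ (υ.app A)) g hg m hm
      calc (T.w hm.le).app A ≫ (T.Fo l).map g ≫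
              (Ev ((T.Fo l).obj A) (υ.app A)).ε l
          = ((T.Fo m).map g ≫ (T.w hm.le).app ((T.Fo l).obj A)) ≫
              (Ev ((T.Fo l).obj A) (υ.app A)).ε l := by
            rw [(T.w hm.le).naturality g, Category.assoc]
        _ = (T.Fo m).map g ≫ (Ev ((T.Fo l).obj A) (υ.app A)).ε m := by
            rw [Category.assoc, (Ev ((T.Fo l).obj A) (υ.app A)).ε_limit l hl m hm]
        _ = (T.w hm.le).app A := hmi
        _ = (T.w hm.le).app A ≫ 𝟙 ((T.Fo l).obj A) := by rw [Category.comp_id]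
    rw [hg] at H
    exact H
  · intro A
    exact epsNat T (Ev _ (υ.app ((T.Fo l).obj A))) (Ev _ (υ.app A))
      (upsilon_eps T l hl υ hυ (Ev _ (υ.app A))) l
  · intro M ρ
    obtain ⟨ηM, hηM⟩ : ∃ ηM : ∀ A : C, A ⟶ (M : C ⥤ C).obj A,
        ∀ A : C, ηM A = M.η.app A := ⟨fun A => M.η.app A, fun A => rfl⟩
    obtain ⟨αf, hαf⟩ : ∃ αf : ∀ A : C, F.obj ((M : C ⥤ C).obj A) ⟶ (M : C ⥤ C).obj A,
        ∀ A : C, αf A = ρ.app ((M : C ⥤ C).obj A) ≫ M.μ.app A := ⟨_, fun A => rfl⟩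
    have h01l : (0 : Ordinal.{v}) + 1 < l := by
      rw [Ordinal.add_one_eq_succ]; exact hl.succ_lt hl.pos
    have hηnat : ∀ {A B : C} (f : A ⟶ B),
        f ≫ ηM B = ηM A ≫ (M : C ⥤ C).map f := by
      intro A B f
      rw [hηM, hηM]
      simpa using M.η.naturality f
    have hημ : ∀ A : C, ηM ((M : C ⥤ C).obj A) ≫ M.μ.app A = 𝟙 ((M : C ⥤ C).obj A) := by
      intro A
      rw [hηM]
      exact M.left_unit A
    have hunit : ∀ A : C, F.map (ηM A) ≫ αf A = ρ.app A := by
      intro A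
      rw [hαf, hηM, ← Category.assoc, ρ.naturality (M.η.app A), Category.assoc,
        M.right_unit A, Category.comp_id]
      simp
    have algM : ∀ {A B : C} (f : A ⟶ B),
        αf A ≫ (M : C ⥤ C).map f = F.map ((M : C ⥤ C).map f) ≫ αf B := by
      intro A B f
      rw [hαf, hαf]
      calc (ρ.app ((M : C ⥤ C).obj A) ≫ M.μ.app A) ≫ (M : C ⥤ C).map f
          = ρ.app ((M : C ⥤ C).obj A) ≫ M.μ.app A ≫ (M : C ⥤ C).map f := by
            rw [Category.assoc]
        _ = ρ.app ((M : C ⥤ C).obj A) ≫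
              ((M : C ⥤ C) ⋙ (M : C ⥤ C)).map f ≫ M.μ.app B := by
            rw [M.μ.naturality f]
        _ = (ρ.app ((M : C ⥤ C).obj A) ≫ (M : C ⥤ C).map ((M : C ⥤ C).map f)) ≫
              M.μ.app B := by rw [Functor.comp_map, Category.assoc]
        _ = (F.map ((M : C ⥤ C).map f) ≫ ρ.app ((M : C ⥤ C).obj B)) ≫ M.μ.app B := by
            rw [ρ.naturality ((M : C ⥤ C).map f)]
        _ = F.map ((M : C ⥤ C).map f) ≫ ρ.app ((M : C ⥤ C).obj B) ≫ M.μ.app B := by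
            rw [Category.assoc]
    have algg : ∀ {A : C} (s : (T.Fo l).obj A ⟶ (M : C ⥤ C).obj A),
        αf ((T.Fo l).obj A) ≫ ((M : C ⥤ C).map s ≫ M.μ.app A) =
          F.map ((M : C ⥤ C).map s ≫ M.μ.app A) ≫ αf A := by
      intro A s
      rw [hαf, hαf]
      calc (ρ.app ((M : C ⥤ C).obj ((T.Fo l).obj A)) ≫ M.μ.app ((T.Fo l).obj A)) ≫
              (M : C ⥤ C).map s ≫ M.μ.app A
          = ρ.app _ ≫ (M.μ.app ((T.Fo l).obj A) ≫ (M : C ⥤ C).map s) ≫ M.μ.app A := by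
            simp only [Category.assoc]
        _ = ρ.app _ ≫ (((M : C ⥤ C) ⋙ (M : C ⥤ C)).map s ≫
              M.μ.app ((M : C ⥤ C).obj A)) ≫ M.μ.app A := by
            rw [M.μ.naturality s]
        _ = ρ.app _ ≫ (M : C ⥤ C).map ((M : C ⥤ C).map s) ≫
              M.μ.app ((M : C ⥤ C).obj A) ≫ M.μ.app A := by
            simp only [Functor.comp_map, Category.assoc]
        _ = ρ.app _ ≫ (M : C ⥤ C).map ((M : C ⥤ C).map s) ≫
              (M : C ⥤ C).map (M.μ.app A) ≫ M.μ.app A := by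
            rw [← Monad.assoc]
        _ = (ρ.app _ ≫ (M : C ⥤ C).map ((M : C ⥤ C).map s ≫ M.μ.app A)) ≫ M.μ.app A := by
            rw [Functor.map_comp]
            simp only [Category.assoc]
        _ = (F.map ((M : C ⥤ C).map s ≫ M.μ.app A) ≫
              ρ.app ((M : C ⥤ C).obj A)) ≫ M.μ.app A := by
            rw [ρ.naturality ((M : C ⥤ C).map s ≫ M.μ.app A)]
        _ = F.map ((M : C ⥤ C).map s ≫ M.μ.app A) ≫ ρ.app ((M : C ⥤ C).obj A) ≫
              M.μ.app A := by rw [Category.assoc]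
    have hσunit : ∀ A : C,
        (T.ι l).app A ≫ ((T.Fo l).map (ηM A) ≫
          (Ev ((M : C ⥤ C).obj A) (αf A)).ε l) = ηM A := by
      intro A
      have hnat : (T.ι l).app A ≫ (T.Fo l).map (ηM A) =
          ηM A ≫ (T.ι l).app ((M : C ⥤ C).obj A) := by
        simpa using ((T.ι l).naturality (ηM A)).symm
      rw [← Category.assoc, hnat, Category.assoc,
        iota_eps T hl (Ev ((M : C ⥤ C).obj A) (αf A)), Category.comp_id]
    have hσalg : ∀ A : C,
        υ.app A ≫ ((T.Fo l).map (ηM A) ≫ (Ev ((M : C ⥤ C).obj A) (αf A)).ε l) =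
          F.map ((T.Fo l).map (ηM A) ≫ (Ev ((M : C ⥤ C).obj A) (αf A)).ε l) ≫ αf A :=
      fun A => free_alg_hom T l hl υ hυ (Ev ((M : C ⥤ C).obj A) (αf A)) (ηM A)
    have hυy : ∀ A : C,
        y.app ((T.Fo l).obj A) ≫ (Ev ((T.Fo l).obj A) (υ.app A)).ε l = υ.app A := by
      intro A
      rw [hy ((T.Fo l).obj A)]
      simp only [Category.assoc]
      have Hc : F.map ((T.ι 0).app ((T.Fo l).obj A)) ≫ (T.q 0).app ((T.Fo l).obj A) ≫
              (T.w h1).app ((T.Fo l).obj A) ≫ (Ev ((T.Fo l).obj A) (υ.app A)).ε l =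
              υ.app A :=
        calc F.map ((T.ι 0).app ((T.Fo l).obj A)) ≫ (T.q 0).app ((T.Fo l).obj A) ≫
              (T.w h1).app ((T.Fo l).obj A) ≫ (Ev ((T.Fo l).obj A) (υ.app A)).ε l
          = F.map ((T.ι 0).app ((T.Fo l).obj A)) ≫ (T.q 0).app ((T.Fo l).obj A) ≫
              (Ev ((T.Fo l).obj A) (υ.app A)).ε (0 + 1) := by
               rw [(Ev ((T.Fo l).obj A) (υ.app A)).ε_limit l hl (0 + 1) h01l]
        _ = F.map ((T.ι 0).app ((T.Fo l).obj A)) ≫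
              F.map ((Ev ((T.Fo l).obj A) (υ.app A)).ε 0) ≫ υ.app A := by
            rw [(Ev ((T.Fo l).obj A) (υ.app A)).ε_succ_q 0]
        _ = F.map ((T.ι 0).app ((T.Fo l).obj A) ≫
              (Ev ((T.Fo l).obj A) (υ.app A)).ε 0) ≫ υ.app A := by
            rw [F.map_comp, Category.assoc]
        _ = υ.app A := by
            rw [(Ev ((T.Fo l).obj A) (υ.app A)).ε_zero]
            simp
      exact Hc
    refine ⟨{ app := fun A => (T.Fo l).map (ηM A) ≫ (Ev ((M : C ⥤ C).obj A) (αf A)).ε l,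
              naturality := fun A B f => ?_ }, ⟨⟨?_, ?_⟩, ?_⟩, ?_⟩
    · -- naturality of σ
      have h3 := epsNat T (Ev ((M : C ⥤ C).obj A) (αf A)) (Ev ((M : C ⥤ C).obj B) (αf B))
        (algM f) l
      rw [← Category.assoc, ← Functor.map_comp, hηnat f, Functor.map_comp, Category.assoc,
        h3, ← Category.assoc]
    · -- unit law
      intro A
      exact (hσunit A).trans (hηM A)
    · -- multiplication law
      intro A
      obtain ⟨s, hs⟩ : ∃ s : (T.Fo l).obj A ⟶ (M : C ⥤ C).obj A,
          s = (T.Fo l).map (ηM A) ≫ (Ev ((M : C ⥤ C).obj A) (αf A)).ε l := ⟨_, rfl⟩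
      have halgs : υ.app A ≫ s = F.map s ≫ αf A := by rw [hs]; exact hσalg A
      have heq1 : (Ev ((T.Fo l).obj A) (υ.app A)).ε l ≫ s =
          (T.Fo l).map s ≫ (Ev ((M : C ⥤ C).obj A) (αf A)).ε l :=
        (epsNat T (Ev ((T.Fo l).obj A) (υ.app A)) (Ev ((M : C ⥤ C).obj A) (αf A))
          halgs l).symm
      have heq2 := epsNat T (Ev ((M : C ⥤ C).obj ((T.Fo l).obj A)) (αf ((T.Fo l).obj A)))
        (Ev ((M : C ⥤ C).obj A) (αf A)) (algg s) l
      have hkey : ηM ((T.Fo l).obj A) ≫ (M : C ⥤ C).map s ≫ M.μ.app A = s := by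
        rw [← Category.assoc, ← hηnat s, Category.assoc, hημ A, Category.comp_id]
      have H : (Ev ((T.Fo l).obj A) (υ.app A)).ε l ≫ s =
          ((T.Fo l).map (ηM ((T.Fo l).obj A)) ≫
            (Ev ((M : C ⥤ C).obj ((T.Fo l).obj A)) (αf ((T.Fo l).obj A))).ε l) ≫
            (M : C ⥤ C).map s ≫ M.μ.app A := by
        calc (Ev ((T.Fo l).obj A) (υ.app A)).ε l ≫ s
            = (T.Fo l).map s ≫ (Ev ((M : C ⥤ C).obj A) (αf A)).ε l := heq1
          _ = (T.Fo l).map (ηM ((T.Fo l).obj A) ≫ (M : C ⥤ C).map s ≫ M.μ.app A) ≫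
                (Ev ((M : C ⥤ C).obj A) (αf A)).ε l := by rw [hkey]
          _ = (T.Fo l).map (ηM ((T.Fo l).obj A)) ≫
                (T.Fo l).map ((M : C ⥤ C).map s ≫ M.μ.app A) ≫
                (Ev ((M : C ⥤ C).obj A) (αf A)).ε l := by
              rw [Functor.map_comp, Category.assoc]
          _ = (T.Fo l).map (ηM ((T.Fo l).obj A)) ≫
                (Ev ((M : C ⥤ C).obj ((T.Fo l).obj A)) (αf ((T.Fo l).obj A))).ε l ≫
                (M : C ⥤ C).map s ≫ M.μ.app A := by rw [heq2]
          _ = ((T.Fo l).map (ηM ((T.Fo l).obj A)) ≫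
                (Ev ((M : C ⥤ C).obj ((T.Fo l).obj A)) (αf ((T.Fo l).obj A))).ε l) ≫
                (M : C ⥤ C).map s ≫ M.μ.app A := by rw [← Category.assoc]
      rw [hs] at H
      exact H
    · -- y ≫ σ = ρ
      ext A
      show y.app A ≫ ((T.Fo l).map (ηM A) ≫ (Ev ((M : C ⥤ C).obj A) (αf A)).ε l) = ρ.app A
      rw [hy A]
      have hwnat : (T.w h1).app A ≫ (T.Fo l).map (ηM A) ≫
          (Ev ((M : C ⥤ C).obj A) (αf A)).ε l =
          (T.Fo (0 + 1)).map (ηM A) ≫ (Ev ((M : C ⥤ C).obj A) (αf A)).ε (0 + 1) := by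
        rw [← Category.assoc, ← (T.w h1).naturality (ηM A), Category.assoc,
          (Ev ((M : C ⥤ C).obj A) (αf A)).ε_limit l hl (0 + 1) h01l]
      have hqnat : (T.q 0).app A ≫ (T.Fo (0 + 1)).map (ηM A) ≫
          (Ev ((M : C ⥤ C).obj A) (αf A)).ε (0 + 1) =
          F.map ((T.Fo 0).map (ηM A)) ≫
            F.map ((Ev ((M : C ⥤ C).obj A) (αf A)).ε 0) ≫ αf A := by
        have hn : (T.q 0).app A ≫ (T.Fo (0 + 1)).map (ηM A) =
            F.map ((T.Fo 0).map (ηM A)) ≫ (T.q 0).app ((M : C ⥤ C).obj A) := by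
          simpa using ((T.q 0).naturality (ηM A)).symm
        rw [← Category.assoc, hn, Category.assoc,
          (Ev ((M : C ⥤ C).obj A) (αf A)).ε_succ_q 0]
      have hfin : F.map ((T.ι 0).app A) ≫ F.map ((T.Fo 0).map (ηM A)) ≫
          F.map ((Ev ((M : C ⥤ C).obj A) (αf A)).ε 0) ≫ αf A = ρ.app A := by
        have hn : (T.ι 0).app A ≫ (T.Fo 0).map (ηM A) =
            ηM A ≫ (T.ι 0).app ((M : C ⥤ C).obj A) := by
          simpa using ((T.ι 0).naturality (ηM A)).symm
        calc F.map ((T.ι 0).app A) ≫ F.map ((T.Fo 0).map (ηM A)) ≫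
                F.map ((Ev ((M : C ⥤ C).obj A) (αf A)).ε 0) ≫ αf A
            = F.map ((T.ι 0).app A ≫ (T.Fo 0).map (ηM A)) ≫
                F.map ((Ev ((M : C ⥤ C).obj A) (αf A)).ε 0) ≫ αf A := by
              rw [F.map_comp, Category.assoc]
          _ = F.map (ηM A ≫ (T.ι 0).app ((M : C ⥤ C).obj A)) ≫
                F.map ((Ev ((M : C ⥤ C).obj A) (αf A)).ε 0) ≫ αf A := by rw [hn]
          _ = F.map (ηM A) ≫ F.map ((T.ι 0).app ((M : C ⥤ C).obj A)) ≫
                F.map ((Ev ((M : C ⥤ C).obj A) (αf A)).ε 0) ≫ αf A := by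
              rw [F.map_comp, Category.assoc]
          _ = F.map (ηM A) ≫ F.map ((T.ι 0).app ((M : C ⥤ C).obj A) ≫
                (Ev ((M : C ⥤ C).obj A) (αf A)).ε 0) ≫ αf A := by
              rw [F.map_comp, Category.assoc]
          _ = F.map (ηM A) ≫ αf A := by
              rw [(Ev ((M : C ⥤ C).obj A) (αf A)).ε_zero, F.map_id, Category.id_comp]
          _ = ρ.app A := hunit A
      simp only [Category.assoc]
      rw [hwnat, hqnat]
      exact hfin
    · -- uniqueness
      intro σ' hσ'
      obtain ⟨⟨hu', hm'⟩, hy'⟩ := hσ'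
      have hm2 : ∀ B : C, (Ev ((T.Fo l).obj B) (υ.app B)).ε l ≫ σ'.app B =
          σ'.app ((T.Fo l).obj B) ≫ (M : C ⥤ C).map (σ'.app B) ≫ M.μ.app B := hm'
      have hyρ : ∀ X : C, y.app X ≫ σ'.app X = ρ.app X := by
        intro X
        rw [← NatTrans.comp_app, hy']
      have hA : ∀ B : C, υ.app B ≫ σ'.app B = F.map (σ'.app B) ≫ αf B := by
        intro B
        calc υ.app B ≫ σ'.app B
            = (y.app ((T.Fo l).obj B) ≫ (Ev ((T.Fo l).obj B) (υ.app B)).ε l) ≫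
                σ'.app B := by rw [hυy B]
          _ = y.app ((T.Fo l).obj B) ≫ (Ev ((T.Fo l).obj B) (υ.app B)).ε l ≫
                σ'.app B := by rw [Category.assoc]
          _ = y.app ((T.Fo l).obj B) ≫ σ'.app ((T.Fo l).obj B) ≫
                (M : C ⥤ C).map (σ'.app B) ≫ M.μ.app B := by rw [hm2 B]
          _ = (y.app ((T.Fo l).obj B) ≫ σ'.app ((T.Fo l).obj B)) ≫
                (M : C ⥤ C).map (σ'.app B) ≫ M.μ.app B := by rw [← Category.assoc]
          _ = ρ.app ((T.Fo l).obj B) ≫ (M : C ⥤ C).map (σ'.app B) ≫ M.μ.app B := by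
              rw [hyρ ((T.Fo l).obj B)]
          _ = (ρ.app ((T.Fo l).obj B) ≫ (M : C ⥤ C).map (σ'.app B)) ≫ M.μ.app B := by
              rw [← Category.assoc]
          _ = (F.map (σ'.app B) ≫ ρ.app ((M : C ⥤ C).obj B)) ≫ M.μ.app B := by
              rw [ρ.naturality (σ'.app B)]
          _ = F.map (σ'.app B) ≫ ρ.app ((M : C ⥤ C).obj B) ≫ M.μ.app B := by
              rw [Category.assoc]
          _ = F.map (σ'.app B) ≫ αf B := by rw [hαf]
      ext A
      have h1eq : (T.ι l).app A ≫ σ'.app A =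
          (T.ι l).app A ≫ ((T.Fo l).map (ηM A) ≫ (Ev ((M : C ⥤ C).obj A) (αf A)).ε l) := by
        rw [hσunit A, hu' A, hηM A]
      exact hom_unique T l hl υ hυ (αf A) h1eq (hA A) (hσalg A)
end

section
/- Let F, G be endofunctors on a cocomplete category C both preserving colimits of λ-chains, and ρ : G → F_λ a natural transformation. Define ρ_1 = [ρ, η^F] : G_1 = G + Id → F_λ and ρ_{k+1} = [μ^F ∘ ρ F_λ ∘ G ρ_k, η^F] : G_{k+1} = G G_k + Id → F_λ, extended by colimits at limit ordinals. Then for all ordinals j ≤ k, ρ_k ∘ w^G_{j,k} = ρ_j, where w^G are the connecting maps of the free-algebra construction for G. -/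
open CategoryTheory CategoryTheory.Limits

universe v u

/-- The chain construction extending a natural transformation `ρ : G ⟶ F_λ` to
transformations `ρ_k : G_k ⟶ F_λ` on the term functors of `G`:  `ρ₁ = [ρ, η]`,
`ρ_{k+1} = [μ ∘ ρ F_λ ∘ G ρ_k, η]` (where `η = ι_λ` is the unit and `μ` the multiplication of
the free monad on `F`), with colimits at limit ordinals. -/
structure ChainExtension {C : Type u} [Category.{v} C] (F G : C ⥤ C)
    (TF : TermConstruction F) (TG : TermConstruction G) (l : Ordinal.{v})
    (μ : TF.Fo l ⋙ TF.Fo l ⟶ TF.Fo l) (ρ : G ⟶ TF.Fo l) where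
  ρo : ∀ k : Ordinal.{v}, TG.Fo k ⟶ TF.Fo l
  ρo_ι : ∀ k : Ordinal.{v}, TG.ι k ≫ ρo k = TF.ι l
  ρo_one : ∀ A : C,
      G.map ((TG.ι 0).app A) ≫ (TG.q 0).app A ≫ (ρo (0 + 1)).app A = ρ.app A
  ρo_succ : ∀ (k : Ordinal.{v}) (A : C),
      (TG.q k).app A ≫ (ρo (k + 1)).app A =
        G.map ((ρo k).app A) ≫ ρ.app ((TF.Fo l).obj A) ≫ μ.app A
  ρo_limit : ∀ (k : Ordinal.{v}), Order.IsSuccLimit k → ∀ (j : Ordinal.{v}) (h : j < k),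
      TG.w h.le ≫ ρo k = ρo j


/-- For the chain construction `ρ_k : G_k ⟶ F_λ` extending `ρ : G ⟶ F_λ`, one has
`ρ_k ∘ w^G_{j,k} = ρ_j` for all ordinals `j ≤ k`. -/
theorem chainExtension_comp_w {C : Type u} [Category.{v} C] [HasColimits C] (F G : C ⥤ C)
    (TF : TermConstruction F) (TG : TermConstruction G) (l : Ordinal.{v}) (hl : Order.IsSuccLimit l)
    [PreservesColimitsOfShape {m : Ordinal.{v} // m < l} F]
    [PreservesColimitsOfShape {m : Ordinal.{v} // m < l} G]
    (μ : TF.Fo l ⋙ TF.Fo l ⟶ TF.Fo l) (ρ : G ⟶ TF.Fo l)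
    (R : ChainExtension F G TF TG l μ ρ)
    {j k : Ordinal.{v}} (h : j ≤ k) :
    TG.w h ≫ R.ρo k = R.ρo j := by
  induction k using Ordinal.induction generalizing j with
  | h k IH =>
  rcases h.lt_or_eq with hjk | rfl
  · rcases Ordinal.zero_or_succ_or_isSuccLimit k with rfl | ⟨m, hm⟩ | hk
    · exact absurd hjk not_lt_zero
    · obtain rfl : k = m + 1 := by rw [← hm, Ordinal.add_one_eq_succ]
      have hjm : j ≤ m := by
        rwa [Ordinal.add_one_eq_succ, Order.lt_succ_iff] at hjk
      have hmk : m < m + 1 := by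
        rw [Ordinal.add_one_eq_succ]; exact Order.lt_succ m
      have key : ∀ j', j' ≤ m → ∀ h' : j' ≤ m + 1,
          TG.w h' ≫ R.ρo (m + 1) = R.ρo j' := by
        intro j'
        induction j' using Ordinal.induction with
        | h j' IHj =>
        intro hj'm h'
        rcases Ordinal.zero_or_succ_or_isSuccLimit j' with rfl | ⟨p, hp⟩ | hj'
        · have : IsIso (TG.ι 0) := TG.iso0
          rw [← cancel_epi (TG.ι 0), ← Category.assoc, TG.ι_w h', R.ρo_ι, R.ρo_ι]
        · obtain rfl : j' = p + 1 := by rw [← hp, Ordinal.add_one_eq_succ]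
          have hpm : p ≤ m := by
            have : p < p + 1 := by rw [Ordinal.add_one_eq_succ]; exact Order.lt_succ p
            exact this.le.trans hj'm
          ext A
          refine BinaryCofan.IsColimit.hom_ext (TG.succ_isColimit p A).some ?_ ?_
          · have hq := NatTrans.congr_app (TG.q_w hpm) A
            simp only [NatTrans.comp_app, Functor.whiskerRight_app, BinaryCofan.mk_inl] at hq ⊢
            calc (TG.q p).app A ≫ (TG.w h').app A ≫ (R.ρo (m + 1)).app A
                = (G.map ((TG.w hpm).app A) ≫ (TG.q m).app A) ≫ (R.ρo (m + 1)).app A := by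
                  rw [← Category.assoc, ← hq]
              _ = G.map ((TG.w hpm).app A) ≫ G.map ((R.ρo m).app A) ≫
                    ρ.app ((TF.Fo l).obj A) ≫ μ.app A := by
                  rw [Category.assoc, R.ρo_succ m A]
              _ = G.map ((TG.w hpm).app A ≫ (R.ρo m).app A) ≫
                    ρ.app ((TF.Fo l).obj A) ≫ μ.app A := by
                  rw [G.map_comp, Category.assoc]
              _ = G.map ((R.ρo p).app A) ≫ ρ.app ((TF.Fo l).obj A) ≫ μ.app A := by
                  have := NatTrans.congr_app (IH m hmk hpm) A
                  simp only [NatTrans.comp_app] at this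
                  rw [this]
              _ = (TG.q p).app A ≫ (R.ρo (p + 1)).app A := (R.ρo_succ p A).symm
          · have h1 := NatTrans.congr_app (TG.ι_w h') A
            have h2 := NatTrans.congr_app (R.ρo_ι (m + 1)) A
            have h3 := NatTrans.congr_app (R.ρo_ι (p + 1)) A
            simp only [NatTrans.comp_app, BinaryCofan.mk_inr] at h1 h2 h3 ⊢
            show (TG.ι (p + 1)).app A ≫ (TG.w h').app A ≫ (R.ρo (m + 1)).app A = (TG.ι (p + 1)).app A ≫ (R.ρo (p + 1)).app A
            rw [← Category.assoc, h1, h2, h3]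
        · ext A
          have compat : ∀ (i i' : Ordinal.{v}) (hle : i ≤ i') (hi' : i' < j'),
              (TG.w hle).app A ≫ (R.ρo i').app A = (R.ρo i).app A := by
            intro i i' hle hi'
            have hi'k : i' < m + 1 := lt_of_lt_of_le hi' (hj'm.trans hmk.le)
            have := NatTrans.congr_app (IH i' hi'k hle) A
            simpa only [NatTrans.comp_app] using this
          obtain ⟨kmap, -, huniq⟩ := TG.limit_exists_unique j' hj' A ((TF.Fo l).obj A)
            (fun i _ => (R.ρo i).app A) compat
          have e1 : (TG.w h' ≫ R.ρo (m + 1)).app A = kmap := by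
            refine huniq _ fun i hi => ?_
            have hw := NatTrans.congr_app (TG.w_trans hi.le h') A
            simp only [NatTrans.comp_app] at hw ⊢
            rw [← Category.assoc, hw]
            have := NatTrans.congr_app (IHj i hi (hi.le.trans hj'm) (hi.le.trans h')) A
            simpa only [NatTrans.comp_app] using this
          have e2 : (R.ρo j').app A = kmap := by
            refine huniq _ fun i hi => ?_
            have := NatTrans.congr_app (R.ρo_limit j' hj' i hi) A
            simpa only [NatTrans.comp_app] using this
          rw [e1, e2]
      exact key j hjm h
    · exact R.ρo_limit k hk j hjk
  · rw [show TG.w h = 𝟙 (TG.Fo j) from TG.w_refl j, Category.id_comp]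
end

section
/- Let ρ : G → F_λ be a natural transformation between endofunctors where F, G preserve colimits of λ-chains. Then the transformation ρ_λ : G_λ → F_λ obtained by the chain construction coincides with the unique monad morphism σ : M(G) → M(F) satisfying σ ∘ y^G_λ = ρ given by the freeness of the monad M(G) on G. -/
open CategoryTheory CategoryTheory.Limits

universe v u

/-- The transformation `ρ_λ : G_λ ⟶ F_λ` obtained by the chain construction coincides with the
monad morphism `σ : M(G) ⟶ M(F)` satisfying `σ ∘ y^G_λ = ρ` given by the freeness of the
monad `M(G)`: any monad morphism `σ` between the free monads `(G_λ, ι^G_λ, μ^G)` and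
`(F_λ, ι^F_λ, μ^F)` (multiplications given by term-evaluation on the free algebras) with
`σ ∘ y^G_λ = ρ` equals `ρ_λ`. -/
theorem chainExtension_eq_monad_morphism {C : Type u} [Category.{v} C] [HasColimits C]
    (F G : C ⥤ C) (TF : TermConstruction F) (TG : TermConstruction G)
    (l : Ordinal.{v}) (hl : Order.IsSuccLimit l)
    [PreservesColimitsOfShape {m : Ordinal.{v} // m < l} F]
    [PreservesColimitsOfShape {m : Ordinal.{v} // m < l} G]
    (EvF : ∀ (A : C) (α : F.obj A ⟶ A), TermEval F TF A α)
    (EvG : ∀ (A : C) (α : G.obj A ⟶ A), TermEval G TG A α)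
    (υF : TF.Fo l ⋙ F ⟶ TF.Fo l)
    (hυF : ∀ (n : Ordinal.{v}) (hn : n < l) (hn1 : n + 1 ≤ l) (A : C),
      F.map ((TF.w hn.le).app A) ≫ υF.app A = (TF.q n).app A ≫ (TF.w hn1).app A)
    (υG : TG.Fo l ⋙ G ⟶ TG.Fo l)
    (hυG : ∀ (n : Ordinal.{v}) (hn : n < l) (hn1 : n + 1 ≤ l) (A : C),
      G.map ((TG.w hn.le).app A) ≫ υG.app A = (TG.q n).app A ≫ (TG.w hn1).app A)
    (μF : TF.Fo l ⋙ TF.Fo l ⟶ TF.Fo l)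
    (hμF : ∀ A : C, μF.app A = (EvF ((TF.Fo l).obj A) (υF.app A)).ε l)
    (μG : TG.Fo l ⋙ TG.Fo l ⟶ TG.Fo l)
    (hμG : ∀ A : C, μG.app A = (EvG ((TG.Fo l).obj A) (υG.app A)).ε l)
    (ρ : G ⟶ TF.Fo l) (R : ChainExtension F G TF TG l μF ρ)
    (yG : G ⟶ TG.Fo l) (h1 : (0 : Ordinal.{v}) + 1 ≤ l)
    (hyG : ∀ A : C, yG.app A = G.map ((TG.ι 0).app A) ≫ (TG.q 0).app A ≫ (TG.w h1).app A)
    (σ : TG.Fo l ⟶ TF.Fo l)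
    (σ_unit : ∀ A : C, (TG.ι l).app A ≫ σ.app A = (TF.ι l).app A)
    (σ_mul : ∀ A : C, μG.app A ≫ σ.app A =
      σ.app ((TG.Fo l).obj A) ≫ (TF.Fo l).map (σ.app A) ≫ μF.app A)
    (σ_y : yG ≫ σ = ρ) :
    σ = R.ρo l := by
  -- Key lemma: the action of σ on the "algebra structure" υG.
  have key : ∀ A : C, υG.app A ≫ σ.app A =
      G.map (σ.app A) ≫ ρ.app ((TF.Fo l).obj A) ≫ μF.app A := by
    intro A
    set X := (TG.Fo l).obj A with hX
    set E := EvG X (υG.app A) with hE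
    have h01 : (0 : Ordinal.{v}) + 1 < l := by
      rw [Ordinal.add_one_eq_succ]
      exact hl.succ_lt (pos_iff_ne_zero.2 hl.ne_bot)
    have e1 : (TG.w h1).app X ≫ E.ε l = E.ε (0 + 1) :=
      E.ε_limit l hl (0 + 1) h01
    have e2 : (TG.q 0).app X ≫ E.ε (0 + 1) = G.map (E.ε 0) ≫ υG.app A :=
      E.ε_succ_q 0
    have e3 : G.map ((TG.ι 0).app X) ≫ G.map (E.ε 0) = 𝟙 (G.obj X) := by
      rw [← G.map_comp, E.ε_zero]; exact G.map_id X
    have step1 : yG.app X ≫ μG.app A = υG.app A := by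
      calc yG.app X ≫ μG.app A
          = (G.map ((TG.ι 0).app X) ≫ (TG.q 0).app X ≫ (TG.w h1).app X) ≫
              E.ε l := by rw [hyG X, hμG A]
        _ = G.map ((TG.ι 0).app X) ≫ (TG.q 0).app X ≫ (TG.w h1).app X ≫
              E.ε l := by simp only [Category.assoc]
        _ = G.map ((TG.ι 0).app X) ≫ (TG.q 0).app X ≫ E.ε (0 + 1) := by rw [e1]
        _ = G.map ((TG.ι 0).app X) ≫ G.map (E.ε 0) ≫ υG.app A := by rw [e2]
        _ = υG.app A := by rw [← Category.assoc, e3]; exact Category.id_comp _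
    calc υG.app A ≫ σ.app A
        = yG.app X ≫ μG.app A ≫ σ.app A := by rw [← Category.assoc, step1]
      _ = yG.app X ≫ σ.app X ≫ (TF.Fo l).map (σ.app A) ≫ μF.app A := by
          rw [σ_mul A]
      _ = ρ.app X ≫ (TF.Fo l).map (σ.app A) ≫ μF.app A := by
          rw [← Category.assoc, ← NatTrans.comp_app, σ_y]
      _ = G.map (σ.app A) ≫ ρ.app ((TF.Fo l).obj A) ≫ μF.app A := by
          rw [← Category.assoc, ← ρ.naturality, Category.assoc]
  suffices H : ∀ k : Ordinal.{v}, ∀ hk : k ≤ l, TG.w hk ≫ σ = R.ρo k by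
    have := H l (le_refl l)
    rwa [TG.w_refl l, Category.id_comp] at this
  intro k
  induction k using Ordinal.induction with
  | h k IH =>
    rcases Ordinal.zero_or_succ_or_isSuccLimit k with rfl | ⟨a, rfl⟩ | hlim
    · -- zero case
      intro hk
      haveI := TG.iso0
      rw [← cancel_epi (TG.ι 0), ← Category.assoc, TG.ι_w hk, R.ρo_ι 0]
      ext A
      simpa using σ_unit A
    · -- successor case
      rw [← Ordinal.add_one_eq_succ]
      intro hk
      have haa : a < a + 1 := by
        rw [Ordinal.add_one_eq_succ]; exact Order.lt_succ a
      have haL : a < l := lt_of_lt_of_le haa hk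
      have IHa : TG.w haL.le ≫ σ = R.ρo a := IH a haa haL.le
      ext A
      obtain ⟨hc⟩ := TG.succ_isColimit a A
      apply BinaryCofan.IsColimit.hom_ext hc
      · -- the q-component
        have hq : (TG.q a).app A ≫ (TG.w hk).app A
            = G.map ((TG.w haL.le).app A) ≫ υG.app A := (hυG a haL hk A).symm
        have hI : (TG.w haL.le).app A ≫ σ.app A = (R.ρo a).app A := by
          have := NatTrans.congr_app IHa A
          simpa using this
        calc ((TG.q a).app A) ≫ (TG.w hk ≫ σ).app A
            = ((TG.q a).app A ≫ (TG.w hk).app A) ≫ σ.app A := by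
              simp
          _ = G.map ((TG.w haL.le).app A) ≫ υG.app A ≫ σ.app A := by
              rw [hq, Category.assoc]
          _ = G.map ((TG.w haL.le).app A) ≫ G.map (σ.app A) ≫
                ρ.app ((TF.Fo l).obj A) ≫ μF.app A := by rw [key A]
          _ = G.map ((TG.w haL.le).app A ≫ σ.app A) ≫
                ρ.app ((TF.Fo l).obj A) ≫ μF.app A := by
              rw [G.map_comp, Category.assoc]
          _ = G.map ((R.ρo a).app A) ≫ ρ.app ((TF.Fo l).obj A) ≫ μF.app A := by
              rw [hI]
          _ = (TG.q a).app A ≫ (R.ρo (a + 1)).app A := (R.ρo_succ a A).symm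
      · -- the ι-component
        have hiw : (TG.ι (a + 1)).app A ≫ (TG.w hk).app A = (TG.ι l).app A := by
          have := NatTrans.congr_app (TG.ι_w hk) A
          simpa using this
        have hri : (TG.ι (a + 1)).app A ≫ (R.ρo (a + 1)).app A
            = (TF.ι l).app A := by
          have := NatTrans.congr_app (R.ρo_ι (a + 1)) A
          simpa using this
        calc ((TG.ι (a + 1)).app A) ≫ (TG.w hk ≫ σ).app A
            = ((TG.ι (a + 1)).app A ≫ (TG.w hk).app A) ≫ σ.app A := by simp
          _ = (TG.ι l).app A ≫ σ.app A := by rw [hiw]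
          _ = (TF.ι l).app A := σ_unit A
          _ = (TG.ι (a + 1)).app A ≫ (R.ρo (a + 1)).app A := hri.symm
    · -- limit case
      intro hk
      ext A
      have compat : ∀ (m m' : Ordinal.{v}) (h : m ≤ m') (h' : m' < k),
          (TG.w h).app A ≫ (R.ρo m').app A = (R.ρo m).app A := by
        intro m m' h h'
        have hm' : TG.w (h'.le.trans hk) ≫ σ = R.ρo m' :=
          IH m' h' (h'.le.trans hk)
        have hmm : TG.w (h.trans (h'.le.trans hk)) ≫ σ = R.ρo m :=
          IH m (lt_of_le_of_lt h h') (h.trans (h'.le.trans hk))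
        calc (TG.w h).app A ≫ (R.ρo m').app A
            = (TG.w h).app A ≫ (TG.w (h'.le.trans hk)).app A ≫ σ.app A := by
              rw [← hm']; simp
          _ = ((TG.w h ≫ TG.w (h'.le.trans hk)).app A) ≫ σ.app A := by simp
          _ = (TG.w (h.trans (h'.le.trans hk))).app A ≫ σ.app A := by
              rw [TG.w_trans]
          _ = (R.ρo m).app A := by rw [← hmm]; simp
      obtain ⟨f, -, huniq⟩ := TG.limit_exists_unique k hlim A ((TF.Fo l).obj A)
        (fun m h => (R.ρo m).app A) compat
      have h1' : (TG.w hk ≫ σ).app A = f := by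
        apply huniq
        intro m h
        have hm : TG.w (h.le.trans hk) ≫ σ = R.ρo m := IH m h (h.le.trans hk)
        calc (TG.w h.le).app A ≫ (TG.w hk ≫ σ).app A
            = ((TG.w h.le ≫ TG.w hk).app A) ≫ σ.app A := by simp
          _ = (TG.w (h.le.trans hk)).app A ≫ σ.app A := by rw [TG.w_trans]
          _ = (R.ρo m).app A := by rw [← hm]; simp
      have h2' : (R.ρo k).app A = f := by
        apply huniq
        intro m h
        have := NatTrans.congr_app (R.ρo_limit k hlim m h) A
        simpa using this
      rw [h1', h2']
end

section
/- Given a monad M = (M, η, μ) on a cocomplete category C, the Eilenberg–Moore category of M-algebras is concretely isomorphic over C to the naturally induced class Alg(M, {(q_0 ∘ η, id_Id), (q_1 ∘ M q_0, q_0 ∘ μ)}): an M-algebra structure α : M A → A (as an algebra for the endofunctor M) satisfies α ∘ η_A = id_A and α ∘ μ_A = α ∘ M α if and only if it satisfies the two natural identities (q_0 ∘ η : Id → M_1, id : Id → M_0) and (q_1 ∘ M q_0 : M² → M_2, q_0 ∘ μ : M² → M_1). -/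
open CategoryTheory CategoryTheory.Limits

universe v u

/-- The Eilenberg–Moore algebras of a monad `(M, η, μ)` are exactly the algebras for the
endofunctor `M` satisfying the two natural identities `(q₀ ∘ η : Id ⟶ M₁, id : Id ⟶ M₀)` and
`(q₁ ∘ M q₀ : M² ⟶ M₂, q₀ ∘ μ : M² ⟶ M₁)` (components written via the isomorphism
`ι 0 : Id ⟶ M₀`): a structure map `α : M A ⟶ A` satisfies `α ∘ η_A = id` and
`α ∘ μ_A = α ∘ M α` iff it satisfies the two natural identities. -/
theorem eilenbergMoore_iff_satisfies_identities {C : Type u} [Category.{v} C] [HasColimits C]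
    (M : Monad C) (T : TermConstruction (M : C ⥤ C))
    (A : C) (α : (M : C ⥤ C).obj A ⟶ A) (E : TermEval (M : C ⥤ C) T A α) :
    (M.η.app A ≫ α = 𝟙 A ∧ M.μ.app A ≫ α = (M : C ⥤ C).map α ≫ α) ↔
      ((M.η.app A ≫ (M : C ⥤ C).map ((T.ι 0).app A) ≫ (T.q 0).app A) ≫ E.ε (0 + 1) =
          (T.ι 0).app A ≫ E.ε 0 ∧
        ((M : C ⥤ C).map ((M : C ⥤ C).map ((T.ι 0).app A) ≫ (T.q 0).app A) ≫
            (T.q (0 + 1)).app A) ≫ E.ε (0 + 1 + 1) =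
          (M.μ.app A ≫ (M : C ⥤ C).map ((T.ι 0).app A) ≫ (T.q 0).app A) ≫ E.ε (0 + 1)) := by
  have key : (M : C ⥤ C).map ((T.ι 0).app A) ≫ (T.q 0).app A ≫ E.ε (0 + 1) = α := by
    rw [E.ε_succ_q, ← Category.assoc, ← (M : C ⥤ C).map_comp, E.ε_zero]
    simp
  have key2 : ((M : C ⥤ C).map ((M : C ⥤ C).map ((T.ι 0).app A) ≫ (T.q 0).app A) ≫
      (T.q (0 + 1)).app A) ≫ E.ε (0 + 1 + 1) = (M : C ⥤ C).map α ≫ α := by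
    rw [Category.assoc, E.ε_succ_q, ← Category.assoc, ← (M : C ⥤ C).map_comp,
      Category.assoc, key]
  constructor
  · rintro ⟨h1, h2⟩
    constructor
    · rw [Category.assoc, Category.assoc, key, E.ε_zero, h1]
    · rw [key2, Category.assoc, Category.assoc, key, h2]
  · rintro ⟨h1, h2⟩
    have h1' : M.η.app A ≫ α = 𝟙 A := by
      rw [← key, ← Category.assoc, ← Category.assoc, ← E.ε_zero]
      rw [Category.assoc, Category.assoc] at h1 ⊢
      exact h1
    refine ⟨h1', ?_⟩
    rw [key2, Category.assoc, Category.assoc, key] at h2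
    exact h2.symm
end
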